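/- arXiv:1308.3831 — 3 statements merged into one kernel-verified Lean document; each statement's English description precedes it below -/
import Mathlib

section
/- liminf_{r→∞} p_c^+(WH(r)) ≥ 1/4. -/
open Finset


/-- Number of active neighbors of vertex `i` in the ring `C_n(r)`.
For `n > 2r+1` the `2r` offsets `±1, …, ±r` give pairwise distinct neighbors. -/
def activeNbrs (n r : ℕ) (σ : ZMod n → Bool) (i : ZMod n) : ℕ :=
  ∑ k ∈ Finset.Icc 1 r,
    ((if σ (i + (k : ZMod n)) then 1 else 0) + (if σ (i - (k : ZMod n)) then 1 else 0))

/-- One synchronous step of strict majority bootstrap percolation on `C_n(r)`: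
a passive vertex (degree `2r`) becomes active iff at least `r+1 = ⌈(2r+1)/2⌉`
of its neighbors are active; active vertices stay active. -/
def ringStep (n r : ℕ) (σ : ZMod n → Bool) : ZMod n → Bool :=
  fun i => σ i || decide (r + 1 ≤ activeNbrs n r σ i)

/-- The fixed point of strict MBP on `C_n(r)`; `n` monotone steps suffice to stabilize. -/
def ringFix (n r : ℕ) (σ : ZMod n → Bool) : ZMod n → Bool :=
  (ringStep n r)^[n] σ

/-- Probability of an event under i.i.d. Bernoulli(`p`) initial states. -/
noncomputable def pr {V : Type} [Fintype V] [DecidableEq V] (p : ℝ) (S : Set (V → Bool)) : ℝ :=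
  ∑ σ : V → Bool, S.indicator (fun τ => ∏ v, (if τ v then p else 1 - p)) σ

/-- Expectation of a random variable under i.i.d. Bernoulli(`p`) initial states. -/
noncomputable def expec {V : Type} [Fintype V] [DecidableEq V]
    (p : ℝ) (f : (V → Bool) → ℝ) : ℝ :=
  ∑ σ : V → Bool, f σ * ∏ v, (if σ v then p else 1 - p)

/-- `E_p[X_0(n,r)]`: probability that vertex `0` is active at the fixed point. -/
noncomputable def Ex (r : ℕ) (p : ℝ) (n : ℕ) : ℝ :=
  if h : n = 0 then 0 else
    haveI : NeZero n := ⟨h⟩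
    pr p {σ : ZMod n → Bool | ringFix n r σ 0 = true}

/-- `p_R(n,r,p)`: probability that strictly more than half of the `n` vertices are
active at the fixed point of strict MBP on `C_n(r)`. -/
noncomputable def pR (r : ℕ) (p : ℝ) (n : ℕ) : ℝ :=
  if h : n = 0 then 0 else
    haveI : NeZero n := ⟨h⟩
    pr p {σ : ZMod n → Bool |
      n < 2 * (Finset.univ.filter (fun i : ZMod n => ringFix n r σ i = true)).card}

open Finset

/-- Number of active neighbors of ring vertex `i` in the `r`-wheel `WH_n(r)`:
its `2r` ring neighbors plus the universal vertex (`none`). -/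
def wheelNbrs (n r : ℕ) (σ : Option (ZMod n) → Bool) (i : ZMod n) : ℕ :=
  (if σ none then 1 else 0) +
    ∑ k ∈ Finset.Icc 1 r,
      ((if σ (some (i + (k : ZMod n))) then 1 else 0) +
       (if σ (some (i - (k : ZMod n))) then 1 else 0))

/-- One synchronous step of strict MBP on the `r`-wheel `WH_n(r)`. The universal
vertex (degree `n`) needs at least `⌈(n+1)/2⌉` active neighbors (i.e. `n+1 ≤ 2·#active`);
a ring vertex (degree `2r+1`) needs at least `r+1 = ⌈(2r+2)/2⌉` active neighbors. -/
def wheelStep (n r : ℕ) [NeZero n] (σ : Option (ZMod n) → Bool) :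
    Option (ZMod n) → Bool :=
  fun v =>
    match v with
    | none => σ none ||
        decide (n + 1 ≤ 2 * (Finset.univ.filter (fun i : ZMod n => σ (some i) = true)).card)
    | some i => σ (some i) || decide (r + 1 ≤ wheelNbrs n r σ i)

/-- The fixed point of strict MBP on `WH_n(r)`; `n+1` monotone steps suffice. -/
def wheelFix (n r : ℕ) [NeZero n] (σ : Option (ZMod n) → Bool) : Option (ZMod n) → Bool :=
  (wheelStep n r)^[n + 1] σ

/-- `p_W(n,r,p)`: probability that strict MBP on the `r`-wheel `WH_n(r)` percolates. -/
noncomputable def pW (r : ℕ) (p : ℝ) (n : ℕ) : ℝ :=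
  if h : n = 0 then 0 else
    haveI : NeZero n := ⟨h⟩
    pr p {σ : Option (ZMod n) → Bool | ∀ v, wheelFix n r σ v = true}

/-- `p_c^+(WH(r)) = inf{ p ∈ [0,1] : liminf_{n→∞} P_p(A percolates WH_n(r)) = 1 }`. -/
noncomputable def pcPlus (r : ℕ) : ℝ :=
  sInf {p : ℝ | p ∈ Set.Icc (0:ℝ) 1 ∧ Filter.liminf (fun n => pW r p n) Filter.atTop = 1}

section ProbCore
variable {V : Type} [Fintype V] [DecidableEq V]

noncomputable def wgt (p : ℝ) (σ : V → Bool) : ℝ := ∏ v, (if σ v then p else 1 - p)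

lemma wgt_nonneg {p : ℝ} (h0 : 0 ≤ p) (h1 : p ≤ 1) (σ : V → Bool) : 0 ≤ wgt p σ :=
  Finset.prod_nonneg fun v _ => by split <;> linarith

lemma pr_def (p : ℝ) (S : Set (V → Bool)) : pr p S = ∑ σ : V → Bool, S.indicator (wgt p) σ := rfl

lemma indicator_le_wgt {p : ℝ} (h0 : 0 ≤ p) (h1 : p ≤ 1) (S : Set (V → Bool)) (σ : V → Bool) :
    S.indicator (wgt p) σ ≤ wgt p σ :=
  Set.indicator_le_self' (fun σ _ => wgt_nonneg h0 h1 σ) σ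

lemma pr_nonneg {p : ℝ} (h0 : 0 ≤ p) (h1 : p ≤ 1) (S : Set (V → Bool)) : 0 ≤ pr p S :=
  Finset.sum_nonneg fun σ _ => Set.indicator_nonneg (fun τ _ => wgt_nonneg h0 h1 τ) σ

lemma sum_prod_bool (h : V → Bool → ℝ) :
    ∑ σ : V → Bool, ∏ v, h v (σ v) = ∏ v, (h v true + h v false) := by
  have := (Fintype.prod_sum (ι := V) (κ := fun _ => Bool) h).symm
  rw [this]
  refine Finset.prod_congr rfl fun v _ => ?_
  exact Fintype.sum_bool (h v)

lemma pr_cylinder {p : ℝ} (h0 : 0 ≤ p) (h1 : p ≤ 1) (T : Finset V) (b : V → Bool) :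
    pr p {σ | ∀ v ∈ T, σ v = b v} = ∏ v ∈ T, (if b v then p else 1 - p) := by
  classical
  have key : ∀ σ : V → Bool,
      ({σ : V → Bool | ∀ v ∈ T, σ v = b v}).indicator (wgt p) σ =
      ∏ v, (if v ∈ T then (if σ v = b v then (if σ v then p else 1 - p) else 0)
            else (if σ v then p else 1 - p)) := by
    intro σ
    by_cases hσ : σ ∈ {σ : V → Bool | ∀ v ∈ T, σ v = b v}
    · rw [Set.indicator_of_mem hσ]
      unfold wgt
      refine Finset.prod_congr rfl fun v _ => ?_
      by_cases hv : v ∈ T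
      · simp [hv, hσ v hv]
      · simp [hv]
    · rw [Set.indicator_of_notMem hσ]
      obtain ⟨v₀, hv₀T, hv₀⟩ := by
        simpa [Set.mem_setOf_eq] using hσ
      refine (Finset.prod_eq_zero (Finset.mem_univ v₀) ?_).symm
      simp [hv₀T, hv₀]
  have hsum := sum_prod_bool (V := V)
    (fun v y => if v ∈ T then (if y = b v then (if y = true then p else 1 - p) else 0)
      else (if y = true then p else 1 - p))
  
  rw [pr_def]
  simp only [key]
  rw [hsum]
  refine Eq.trans (Finset.prod_congr rfl fun v _ => ?_)
    (by rw [Finset.prod_ite_mem, Finset.univ_inter] :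
      (∏ v : V, if v ∈ T then (if b v = true then p else 1 - p) else 1)
        = ∏ v ∈ T, if b v = true then p else 1 - p)
  by_cases hv : v ∈ T <;> cases hb : b v <;> simp [hv, hb]

lemma pr_univ {p : ℝ} (h0 : 0 ≤ p) (h1 : p ≤ 1) : pr p (Set.univ : Set (V → Bool)) = 1 := by
  have := pr_cylinder (V := V) h0 h1 ∅ (fun _ => true)
  simpa using this

lemma pr_mono {p : ℝ} (h0 : 0 ≤ p) (h1 : p ≤ 1) {S T : Set (V → Bool)} (h : S ⊆ T) :
    pr p S ≤ pr p T := by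
  rw [pr_def, pr_def]
  refine Finset.sum_le_sum fun σ _ => ?_
  exact Set.indicator_le_indicator_of_subset h (fun τ => wgt_nonneg h0 h1 τ) σ

lemma pr_le_one {p : ℝ} (h0 : 0 ≤ p) (h1 : p ≤ 1) (S : Set (V → Bool)) : pr p S ≤ 1 := by
  rw [← pr_univ (V := V) h0 h1]
  exact pr_mono h0 h1 (Set.subset_univ S)

lemma pr_le_sum {p : ℝ} (h0 : 0 ≤ p) (h1 : p ≤ 1) {S : Set (V → Bool)}
    {J : Type} (A : Finset J) (E : J → Set (V → Bool))
    (h : ∀ σ ∈ S, ∃ j ∈ A, σ ∈ E j) :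
    pr p S ≤ ∑ j ∈ A, pr p (E j) := by
  simp only [pr_def]
  rw [Finset.sum_comm]
  refine Finset.sum_le_sum fun σ _ => ?_
  by_cases hσ : σ ∈ S
  · obtain ⟨j, hjA, hj⟩ := h σ hσ
    rw [Set.indicator_of_mem hσ]
    calc wgt p σ = (E j).indicator (wgt p) σ := (Set.indicator_of_mem hj _).symm
      _ ≤ ∑ j ∈ A, (E j).indicator (wgt p) σ :=
        Finset.single_le_sum (fun j _ => Set.indicator_nonneg (fun τ _ => wgt_nonneg h0 h1 τ) σ) hjA
  · rw [Set.indicator_of_notMem hσ]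
    exact Finset.sum_nonneg fun j _ => Set.indicator_nonneg (fun τ _ => wgt_nonneg h0 h1 τ) σ

lemma pr_markov {p : ℝ} (h0 : 0 ≤ p) (h1 : p ≤ 1) {S : Set (V → Bool)}
    (f : (V → Bool) → ℝ) (hf : ∀ σ, 0 ≤ f σ) {a : ℝ} (ha : 0 < a)
    (h : ∀ σ ∈ S, a ≤ f σ) :
    pr p S ≤ a⁻¹ * ∑ σ : V → Bool, f σ * wgt p σ := by
  rw [pr_def, Finset.mul_sum]
  refine Finset.sum_le_sum fun σ _ => ?_
  by_cases hσ : σ ∈ S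
  · rw [Set.indicator_of_mem hσ]
    have hw := wgt_nonneg h0 h1 σ
    have := h σ hσ
    rw [← mul_assoc]
    have h1a : 1 ≤ a⁻¹ * f σ := by
      rw [← div_eq_inv_mul, le_div_iff₀ ha]
      simpa using this
    nlinarith [hw, h1a]
  · rw [Set.indicator_of_notMem hσ]
    have h2 : (0:ℝ) ≤ a⁻¹ := by positivity
    exact mul_nonneg h2 (mul_nonneg (hf σ) (wgt_nonneg h0 h1 σ))
end ProbCore
section Dyn
variable (n r : ℕ)

lemma ringIter_mono (σ : ZMod n → Bool) (t : ℕ) (v : ZMod n)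
    (h : (ringStep n r)^[t] σ v = true) : (ringStep n r)^[t+1] σ v = true := by
  rw [Function.iterate_succ_apply', ringStep, h, Bool.true_or]

lemma ringIter_mono' (σ : ZMod n → Bool) {t t' : ℕ} (htt : t ≤ t') (v : ZMod n)
    (h : (ringStep n r)^[t] σ v = true) : (ringStep n r)^[t'] σ v = true := by
  obtain ⟨k, rfl⟩ := Nat.exists_eq_add_of_le htt
  induction k with
  | zero => exact h
  | succ m ih => exact ringIter_mono n r σ (t + m) v (ih (Nat.le_add_right _ _))

lemma stable [NeZero n] (σ : ZMod n → Bool) (i : ZMod n)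
    (ρL ρR : ℤ) (hL : 1 ≤ ρL) (hR : 1 ≤ ρR)
    (hrunR : ∀ d ∈ Finset.Icc ρR (ρR + r), σ (i + (d : ZMod n)) = false)
    (hrunL : ∀ d ∈ Finset.Icc (-(ρL + r)) (-ρL), σ (i + (d : ZMod n)) = false)
    (hwin : ∀ c ∈ Finset.Icc (1 - ρL) (ρR - 1),
      (∑ k ∈ Finset.Icc 1 r,
        ((if σ (i + ((c + k : ℤ) : ZMod n)) then 1 else 0) +
         (if σ (i + ((c - k : ℤ) : ZMod n)) then 1 else 0)) : ℕ) ≤ r)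
    (t : ℕ) :
    ∀ d ∈ Finset.Icc (-(ρL + r)) (ρR + r), σ (i + (d : ZMod n)) = false →
      (ringStep n r)^[t] σ (i + (d : ZMod n)) = false := by
  induction t with
  | zero => intro d _ h; simpa using h
  | succ t IH =>
    intro d hd hσd
    have hd' := Finset.mem_Icc.mp hd
    set τ := (ringStep n r)^[t] σ with hτdef
    have hτ : τ (i + (d : ZMod n)) = false := IH d hd hσd
    rw [Function.iterate_succ_apply']
    suffices hA : activeNbrs n r τ (i + (d : ZMod n)) ≤ r by
      show (τ (i + (d : ZMod n)) || decide (r + 1 ≤ activeNbrs n r τ (i + (d : ZMod n)))) = false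
      rw [hτ, Bool.false_or, decide_eq_false_iff_not]
      omega
    -- express activeNbrs through integer offsets
    set g : ℤ → ℕ := fun e => if τ (i + (e : ZMod n)) = true then 1 else 0 with hgdef
    have hact : activeNbrs n r τ (i + (d : ZMod n)) =
        ∑ k ∈ Finset.Icc 1 r, (g (d + k) + g (d - k)) := by
      unfold activeNbrs
      refine Finset.sum_congr rfl fun k _ => ?_
      have h1 : i + (d : ZMod n) + (k : ZMod n) = i + ((d + (k:ℤ) : ℤ) : ZMod n) := by
        push_cast; ring
      have h2 : i + (d : ZMod n) - (k : ZMod n) = i + ((d - (k:ℤ) : ℤ) : ZMod n) := by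
        push_cast; ring
      rw [h1, h2]
    rw [hact]
    have hg1 : ∀ e : ℤ, g e ≤ 1 := by
      intro e; simp only [hgdef]; split <;> omega
    have hg0 : ∀ e ∈ Finset.Icc (-(ρL + r)) (ρR + r), σ (i + (e : ZMod n)) = false → g e = 0 := by
      intro e he hσe; simp only [hgdef, IH e he hσe]; simp
    rcases le_or_gt ρR d with hcase | hlt
    · -- inside the right run
      have hrun0 : ∀ e ∈ Finset.Icc ρR (ρR + r), g e = 0 := by
        intro e he
        have he' := Finset.mem_Icc.mp he
        exact hg0 e (Finset.mem_Icc.mpr ⟨by omega, by omega⟩) (hrunR e he)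
      -- counting functions
      set χp : ℕ → ℕ := fun k => if (d + k : ℤ) ∈ Finset.Icc ρR (ρR + r) then 1 else 0 with hχp
      set χm : ℕ → ℕ := fun k => if (d - k : ℤ) ∈ Finset.Icc ρR (ρR + r) then 1 else 0 with hχm
      have hpt : ∀ k ∈ Finset.Icc 1 r, g (d + k) + g (d - k) + (χp k + χm k) ≤ 2 := by
        intro k _
        have h1 : g (d + k) + χp k ≤ 1 := by
          by_cases hmem : (d + k : ℤ) ∈ Finset.Icc ρR (ρR + r)
          · simp only [hχp, if_pos hmem, hrun0 _ hmem]; omega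
          · simp only [hχp, if_neg hmem]; have := hg1 (d + k); omega
        have h2 : g (d - k) + χm k ≤ 1 := by
          by_cases hmem : (d - k : ℤ) ∈ Finset.Icc ρR (ρR + r)
          · simp only [hχm, if_pos hmem, hrun0 _ hmem]; omega
          · simp only [hχm, if_neg hmem]; have := hg1 (d - k); omega
        omega
      have htot : (∑ k ∈ Finset.Icc 1 r, (g (d + k) + g (d - k)))
          + ((∑ k ∈ Finset.Icc 1 r, χp k) + (∑ k ∈ Finset.Icc 1 r, χm k)) ≤ 2 * r := by
        have := Finset.sum_le_sum hpt
        simp only [Finset.sum_add_distrib] at this ⊢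
        simp only [Finset.sum_const, Nat.card_Icc, smul_eq_mul] at this
        omega
      have hbp : (ρR + r - d).toNat ≤ ∑ k ∈ Finset.Icc 1 r, χp k := by
        calc (ρR + r - d).toNat = ∑ k ∈ Finset.Icc 1 ((ρR + r - d).toNat), 1 := by
              simp [Nat.card_Icc]
          _ = ∑ k ∈ Finset.Icc 1 ((ρR + r - d).toNat), χp k := by
              refine Finset.sum_congr rfl fun k hk => ?_
              have hk' := Finset.mem_Icc.mp hk
              have : (d + k : ℤ) ∈ Finset.Icc ρR (ρR + r) := by
                rw [Finset.mem_Icc]; omega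
              simp only [hχp]; rw [if_pos this]
          _ ≤ ∑ k ∈ Finset.Icc 1 r, χp k := by
              refine Finset.sum_le_sum_of_subset ?_
              apply Finset.Icc_subset_Icc_right; omega
      have hbm : (d - ρR).toNat ≤ ∑ k ∈ Finset.Icc 1 r, χm k := by
        calc (d - ρR).toNat = ∑ k ∈ Finset.Icc 1 ((d - ρR).toNat), 1 := by
              simp [Nat.card_Icc]
          _ = ∑ k ∈ Finset.Icc 1 ((d - ρR).toNat), χm k := by
              refine Finset.sum_congr rfl fun k hk => ?_
              have hk' := Finset.mem_Icc.mp hk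
              have : (d - k : ℤ) ∈ Finset.Icc ρR (ρR + r) := by
                rw [Finset.mem_Icc]; omega
              simp only [hχm]; rw [if_pos this]
          _ ≤ ∑ k ∈ Finset.Icc 1 r, χm k := by
              refine Finset.sum_le_sum_of_subset ?_
              apply Finset.Icc_subset_Icc_right; omega
      omega
    · rcases le_or_gt d (-ρL) with hcase2 | hmid
      · -- inside the left run
        have hrun0 : ∀ e ∈ Finset.Icc (-(ρL + r)) (-ρL), g e = 0 := by
          intro e he
          have he' := Finset.mem_Icc.mp he
          exact hg0 e (Finset.mem_Icc.mpr ⟨by omega, by omega⟩) (hrunL e he)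
        set χp : ℕ → ℕ := fun k => if (d + k : ℤ) ∈ Finset.Icc (-(ρL + r)) (-ρL) then 1 else 0 with hχp
        set χm : ℕ → ℕ := fun k => if (d - k : ℤ) ∈ Finset.Icc (-(ρL + r)) (-ρL) then 1 else 0 with hχm
        have hpt : ∀ k ∈ Finset.Icc 1 r, g (d + k) + g (d - k) + (χp k + χm k) ≤ 2 := by
          intro k _
          have h1 : g (d + k) + χp k ≤ 1 := by
            by_cases hmem : (d + k : ℤ) ∈ Finset.Icc (-(ρL + r)) (-ρL)
            · simp only [hχp, if_pos hmem, hrun0 _ hmem]; omega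
            · simp only [hχp, if_neg hmem]; have := hg1 (d + k); omega
          have h2 : g (d - k) + χm k ≤ 1 := by
            by_cases hmem : (d - k : ℤ) ∈ Finset.Icc (-(ρL + r)) (-ρL)
            · simp only [hχm, if_pos hmem, hrun0 _ hmem]; omega
            · simp only [hχm, if_neg hmem]; have := hg1 (d - k); omega
          omega
        have htot : (∑ k ∈ Finset.Icc 1 r, (g (d + k) + g (d - k)))
            + ((∑ k ∈ Finset.Icc 1 r, χp k) + (∑ k ∈ Finset.Icc 1 r, χm k)) ≤ 2 * r := by
          have := Finset.sum_le_sum hpt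
          simp only [Finset.sum_add_distrib] at this ⊢
          simp only [Finset.sum_const, Nat.card_Icc, smul_eq_mul] at this
          omega
        have hbp : ((-ρL) - d).toNat ≤ ∑ k ∈ Finset.Icc 1 r, χp k := by
          calc ((-ρL) - d).toNat = ∑ k ∈ Finset.Icc 1 (((-ρL) - d).toNat), 1 := by
                simp [Nat.card_Icc]
            _ = ∑ k ∈ Finset.Icc 1 (((-ρL) - d).toNat), χp k := by
                refine Finset.sum_congr rfl fun k hk => ?_
                have hk' := Finset.mem_Icc.mp hk
                have : (d + k : ℤ) ∈ Finset.Icc (-(ρL + r)) (-ρL) := by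
                  rw [Finset.mem_Icc]; omega
                simp only [hχp]; rw [if_pos this]
            _ ≤ ∑ k ∈ Finset.Icc 1 r, χp k := by
                refine Finset.sum_le_sum_of_subset ?_
                apply Finset.Icc_subset_Icc_right; omega
        have hbm : (d - (-(ρL + r))).toNat ≤ ∑ k ∈ Finset.Icc 1 r, χm k := by
          calc (d - (-(ρL + r))).toNat = ∑ k ∈ Finset.Icc 1 ((d - (-(ρL + r))).toNat), 1 := by
                simp [Nat.card_Icc]
            _ = ∑ k ∈ Finset.Icc 1 ((d - (-(ρL + r))).toNat), χm k := by
                refine Finset.sum_congr rfl fun k hk => ?_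
                have hk' := Finset.mem_Icc.mp hk
                have : (d - k : ℤ) ∈ Finset.Icc (-(ρL + r)) (-ρL) := by
                  rw [Finset.mem_Icc]; omega
                simp only [hχm]; rw [if_pos this]
            _ ≤ ∑ k ∈ Finset.Icc 1 r, χm k := by
                refine Finset.sum_le_sum_of_subset ?_
                apply Finset.Icc_subset_Icc_right; omega
        omega
      · -- middle region
        have hmem : d ∈ Finset.Icc (1 - ρL) (ρR - 1) := by
          rw [Finset.mem_Icc]; omega
        calc ∑ k ∈ Finset.Icc 1 r, (g (d + k) + g (d - k))
            ≤ ∑ k ∈ Finset.Icc 1 r,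
              ((if σ (i + ((d + k : ℤ) : ZMod n)) then 1 else 0) +
               (if σ (i + ((d - k : ℤ) : ZMod n)) then 1 else 0)) := by
              refine Finset.sum_le_sum fun k hk => ?_
              have hk' := Finset.mem_Icc.mp hk
              have cov : ∀ e : ℤ, e ∈ Finset.Icc (d - r) (d + r) →
                  g e ≤ if σ (i + (e : ZMod n)) then 1 else 0 := by
                intro e he
                have he' := Finset.mem_Icc.mp he
                by_cases hσe : σ (i + (e : ZMod n)) = true
                · simp only [hσe, if_true]; exact hg1 e
                · have hσe' : σ (i + (e : ZMod n)) = false := by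
                    simpa using hσe
                  rw [hg0 e (Finset.mem_Icc.mpr ⟨by omega, by omega⟩) hσe', hσe']
                  simp
              have c1 := cov (d + k) (Finset.mem_Icc.mpr ⟨by omega, by omega⟩)
              have c2 := cov (d - k) (Finset.mem_Icc.mpr ⟨by omega, by omega⟩)
              omega
          _ ≤ r := hwin d hmem

lemma wheel_coupling [NeZero n] (σw : Option (ZMod n) → Bool) (hc : σw none = false)
    (H : ∀ t, t ≤ n → 2 * (Finset.univ.filter
        (fun i : ZMod n => (ringStep n r)^[t] (fun j => σw (some j)) i = true)).card ≤ n) :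
    ∀ t, t ≤ n + 1 → ((wheelStep n r)^[t] σw none = false) ∧
      ∀ i, (wheelStep n r)^[t] σw (some i) =
        (ringStep n r)^[t] (fun j => σw (some j)) i := by
  intro t
  induction t with
  | zero => intro _; exact ⟨hc, fun i => rfl⟩
  | succ t IH =>
    intro ht
    obtain ⟨h1, h2⟩ := IH (by omega)
    constructor
    · rw [Function.iterate_succ_apply']
      show ((wheelStep n r) ((wheelStep n r)^[t] σw)) none = false
      rw [wheelStep]
      simp only [h1, Bool.false_or, decide_eq_false_iff_not]
      have hfil : (Finset.univ.filter
          (fun i : ZMod n => (wheelStep n r)^[t] σw (some i) = true)) =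
          (Finset.univ.filter
          (fun i : ZMod n => (ringStep n r)^[t] (fun j => σw (some j)) i = true)) := by
        refine Finset.filter_congr fun i _ => ?_
        rw [h2 i]
      rw [hfil]
      have := H t (by omega)
      omega
    · intro i
      rw [Function.iterate_succ_apply', Function.iterate_succ_apply']
      show ((wheelStep n r) ((wheelStep n r)^[t] σw)) (some i) =
        (ringStep n r) ((ringStep n r)^[t] (fun j => σw (some j))) i
      rw [wheelStep, ringStep]
      congr 1
      · exact h2 i
      · have heq : wheelNbrs n r ((wheelStep n r)^[t] σw) i
            = activeNbrs n r ((ringStep n r)^[t] (fun j => σw (some j))) i := by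
          unfold wheelNbrs activeNbrs
          rw [h1]
          have hz : (if (false : Bool) = true then (1:ℕ) else 0) = 0 := rfl
          rw [hz, Nat.zero_add]
          exact Finset.sum_congr rfl fun k _ => by rw [h2 _, h2 _]
        rw [heq]

lemma ring_top [NeZero n] (t : ℕ) (v : Option (ZMod n)) :
    (wheelStep n r)^[t] (fun _ => true) v = true := by
  induction t generalizing v with
  | zero => rfl
  | succ t IH =>
    rw [Function.iterate_succ_apply']
    cases v with
    | none => show (_ || _) = true; rw [IH none, Bool.true_or]
    | some i => show (_ || _) = true; rw [IH (some i), Bool.true_or]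
end Dyn
section Part3

lemma zmod_coe_inj {n : ℕ} [NeZero n] {a b : ℤ} (hab : |a - b| < (n:ℤ))
    (h : ((a : ℤ) : ZMod n) = ((b : ℤ) : ZMod n)) : a = b := by
  rw [ZMod.intCast_eq_intCast_iff] at h
  have hd := Int.ModEq.dvd h
  have := Int.eq_zero_of_abs_lt_dvd hd (by rw [abs_sub_comm] at hab; exact hab)
  omega

variable {V : Type} [Fintype V] [DecidableEq V]

lemma pr_no_allfalse {p : ℝ} (h0 : 0 ≤ p) (h1 : p ≤ 1)
    {J : Type} [DecidableEq J] (A : Finset J) (Tf : J → Finset V) (L : ℕ)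
    (hcard : ∀ a ∈ A, (Tf a).card = L)
    (hdisj : ∀ a ∈ A, ∀ b ∈ A, a ≠ b → Disjoint (Tf a) (Tf b)) :
    ((A.card : ℝ) * (1 - p)^L) * pr p {σ : V → Bool | ∀ a ∈ A, ∃ v ∈ Tf a, σ v = true} ≤ 1 := by
  classical
  set qb : ℝ := (1 - p)^L with hqbdef
  have hqb0 : 0 ≤ qb := pow_nonneg (by linarith) L
  set ind : J → (V → Bool) → ℝ :=
    fun a σ => if ∀ v ∈ Tf a, σ v = false then 1 else 0 with hinddef
  -- cylinder computation
  have hcyl : ∀ (T : Finset V),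
      ∑ σ : V → Bool, (if ∀ v ∈ T, σ v = false then (1:ℝ) else 0) * wgt p σ
        = (1 - p)^(T.card) := by
    intro T
    have e1 : ∑ σ : V → Bool, (if ∀ v ∈ T, σ v = false then (1:ℝ) else 0) * wgt p σ
        = pr p {σ : V → Bool | ∀ v ∈ T, σ v = (fun _ => false) v} := by
      rw [pr_def]
      refine Finset.sum_congr rfl fun σ _ => ?_
      by_cases h : ∀ v ∈ T, σ v = false
      · rw [if_pos h, one_mul, Set.indicator_of_mem]
        exact fun v hv => h v hv
      · rw [if_neg h, zero_mul, eq_comm, Set.indicator_apply_eq_zero]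
        intro hmem
        exact absurd (fun v hv => hmem v hv) h
    rw [e1, pr_cylinder h0 h1]
    simp
  set N : (V → Bool) → ℝ := fun σ => ∑ a ∈ A, ind a σ with hNdef
  set μ : ℝ := (A.card : ℝ) * qb with hμdef
  have hEN : ∑ σ : V → Bool, N σ * wgt p σ = μ := by
    simp only [hNdef, Finset.sum_mul]
    rw [Finset.sum_comm]
    rw [Finset.sum_congr rfl (fun a ha => ?_)]
    · rw [Finset.sum_const, nsmul_eq_mul]
    · rw [show (∑ σ : V → Bool, ind a σ * wgt p σ) = (1-p)^((Tf a).card) from hcyl (Tf a)]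
      rw [hcard a ha]
  have hEN2 : ∑ σ : V → Bool, (N σ)^2 * wgt p σ ≤ μ + μ^2 := by
    have expand : ∀ σ, (N σ)^2 * wgt p σ = ∑ a ∈ A, ∑ b ∈ A, (ind a σ * ind b σ * wgt p σ) := by
      intro σ
      rw [hNdef]
      rw [sq, Finset.sum_mul_sum]
      rw [Finset.sum_mul]
      refine Finset.sum_congr rfl fun a _ => ?_
      rw [Finset.sum_mul]
    rw [Finset.sum_congr rfl fun σ _ => expand σ]
    rw [Finset.sum_comm]
    have swap2 : ∀ a ∈ A, (∑ σ : V → Bool, ∑ b ∈ A, ind a σ * ind b σ * wgt p σ)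
        = ∑ b ∈ A, ∑ σ : V → Bool, ind a σ * ind b σ * wgt p σ := fun a _ => Finset.sum_comm
    rw [Finset.sum_congr rfl swap2]
    have inner : ∀ a ∈ A, ∑ b ∈ A, ∑ σ : V → Bool, ind a σ * ind b σ * wgt p σ
        ≤ ∑ b ∈ A, (qb^2 + if a = b then qb else 0) := by
      intro a ha
      refine Finset.sum_le_sum fun b hb => ?_
      by_cases hab : a = b
      · subst hab
        have : ∀ σ, ind a σ * ind a σ = ind a σ := by
          intro σ; simp only [hinddef]; split <;> norm_num
        calc ∑ σ : V → Bool, ind a σ * ind a σ * wgt p σ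
            = ∑ σ : V → Bool, ind a σ * wgt p σ := by
              refine Finset.sum_congr rfl fun σ _ => by rw [this σ]
          _ = (1-p)^((Tf a).card) := hcyl (Tf a)
          _ = qb := by rw [hcard a ha]
          _ ≤ qb^2 + qb := by nlinarith [sq_nonneg qb]
          _ = qb^2 + if a = a then qb else 0 := by simp
      · have key : ∀ σ : V → Bool, ind a σ * ind b σ =
            if ∀ v ∈ Tf a ∪ Tf b, σ v = false then (1:ℝ) else 0 := by
          intro σ
          simp only [hinddef, ite_mul, one_mul, zero_mul, Finset.forall_mem_union]
          by_cases h1' : ∀ v ∈ Tf a, σ v = false <;>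
            by_cases h2' : ∀ v ∈ Tf b, σ v = false
          · rw [if_pos h1', if_pos h2', if_pos ⟨h1', h2'⟩]
          · rw [if_pos h1', if_neg h2', if_neg (fun h => h2' h.2)]
          · rw [if_neg h1', if_neg (fun h => h1' h.1)]
          · rw [if_neg h1', if_neg (fun h => h1' h.1)]
        calc ∑ σ : V → Bool, ind a σ * ind b σ * wgt p σ
            = ∑ σ : V → Bool, (if ∀ v ∈ Tf a ∪ Tf b, σ v = false then (1:ℝ) else 0) * wgt p σ := by
              refine Finset.sum_congr rfl fun σ _ => by rw [key σ]
          _ = (1-p)^((Tf a ∪ Tf b).card) := hcyl _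
          _ = qb^2 := by
              rw [Finset.card_union_of_disjoint (hdisj a ha b hb hab), hcard a ha, hcard b hb]
              rw [hqbdef, sq, ← pow_add]
          _ ≤ qb^2 + if a = b then qb else 0 := by simp [hab]
    calc ∑ a ∈ A, ∑ b ∈ A, ∑ σ : V → Bool, ind a σ * ind b σ * wgt p σ
        ≤ ∑ a ∈ A, ∑ b ∈ A, (qb^2 + if a = b then qb else 0) :=
          Finset.sum_le_sum inner
      _ = (A.card : ℝ)^2 * qb^2 + (A.card : ℝ) * qb := by
          simp only [Finset.sum_add_distrib, Finset.sum_const, nsmul_eq_mul]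
          rw [Finset.sum_congr rfl
            (fun a ha => by rw [Finset.sum_ite_eq A a (fun _ => qb), if_pos ha])]
          rw [Finset.sum_const, nsmul_eq_mul]
          ring
      _ = μ + μ^2 := by rw [hμdef]; ring
  have hw1 : ∑ σ : V → Bool, wgt p σ = 1 := by
    have := pr_univ (V := V) h0 h1
    rw [pr_def] at this
    simpa using this
  -- Chebyshev
  have hcheb : μ^2 * pr p {σ : V → Bool | ∀ a ∈ A, ∃ v ∈ Tf a, σ v = true}
      ≤ ∑ σ : V → Bool, (N σ - μ)^2 * wgt p σ := by
    rw [pr_def, Finset.mul_sum]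
    refine Finset.sum_le_sum fun σ _ => ?_
    by_cases hσ : σ ∈ {σ : V → Bool | ∀ a ∈ A, ∃ v ∈ Tf a, σ v = true}
    · rw [Set.indicator_of_mem hσ]
      have hN0 : N σ = 0 := by
        rw [hNdef]
        refine Finset.sum_eq_zero fun a ha => ?_
        obtain ⟨v, hv, htrue⟩ := hσ a ha
        simp only [hinddef]
        rw [if_neg]
        intro hall
        rw [hall v hv] at htrue
        exact Bool.false_ne_true htrue
      rw [hN0]
      have : (0 - μ)^2 = μ^2 := by ring
      rw [this]
    · rw [Set.indicator_of_notMem hσ, mul_zero]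
      have := wgt_nonneg h0 h1 σ
      positivity
  have hvar : ∑ σ : V → Bool, (N σ - μ)^2 * wgt p σ ≤ μ := by
    have expand : ∀ σ : V → Bool, (N σ - μ)^2 * wgt p σ
        = (N σ)^2 * wgt p σ - 2*μ*(N σ * wgt p σ) + μ^2 * wgt p σ := by
      intro σ; ring
    rw [Finset.sum_congr rfl fun σ _ => expand σ]
    rw [Finset.sum_add_distrib, Finset.sum_sub_distrib, ← Finset.mul_sum, ← Finset.mul_sum]
    rw [hEN, hw1, mul_one]
    nlinarith [hEN2]
  have hprn : 0 ≤ pr p {σ : V → Bool | ∀ a ∈ A, ∃ v ∈ Tf a, σ v = true} := pr_nonneg h0 h1 _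
  have hμ0 : 0 ≤ μ := by positivity
  rcases eq_or_lt_of_le hμ0 with heq | hpos
  · rw [hμdef] at heq ⊢
    rw [← heq, zero_mul]
    norm_num
  · have h2 : μ^2 * pr p {σ : V → Bool | ∀ a ∈ A, ∃ v ∈ Tf a, σ v = true} ≤ μ :=
      le_trans hcheb hvar
    rw [hμdef] at hpos h2 ⊢
    nlinarith [h2, hpos, hprn]

end Part3

section Window
variable {n : ℕ} [NeZero n]

lemma pr_window {r : ℕ} (hr : 1 ≤ r) (hn : 2*r < n) {q : ℝ} (h0 : 0 ≤ q) (hq : q ≤ 1/2)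
    (i : ZMod n) (c : ℤ) :
    pr q {σw : Option (ZMod n) → Bool | r + 1 ≤ ∑ k ∈ Finset.Icc 1 r,
      ((if σw (some (i + ((c + k : ℤ) : ZMod n))) then 1 else 0) +
       (if σw (some (i + ((c - k : ℤ) : ZMod n))) then 1 else 0) : ℕ)}
    ≤ 4^r * (q^(r+1) * (1-q)^(r-1)) := by
  classical
  have h1 : q ≤ 1 := by linarith
  set fp : ℕ → Option (ZMod n) := fun k => some (i + ((c + k : ℤ) : ZMod n)) with hfp
  set fm : ℕ → Option (ZMod n) := fun k => some (i + ((c - k : ℤ) : ZMod n)) with hfm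
  have coe_inj : ∀ {x y : ℤ}, |x - y| < (n:ℤ) →
      (some (i + (x : ZMod n)) : Option (ZMod n)) = some (i + (y : ZMod n)) → x = y := by
    intro x y hxy he
    have h2 : i + (x : ZMod n) = i + (y : ZMod n) := by
      exact Option.some_injective _ he
    have h3 : ((x : ℤ) : ZMod n) = ((y : ℤ) : ZMod n) := add_left_cancel h2
    exact zmod_coe_inj hxy h3
  have hinjp : Set.InjOn fp (Finset.Icc 1 r) := by
    intro k hk k' hk' he
    simp only [Finset.coe_Icc, Set.mem_Icc] at hk hk'
    have : (c + k : ℤ) = (c + k' : ℤ) := by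
      refine coe_inj ?_ he
      rw [abs_sub_lt_iff]
      omega
    omega
  have hinjm : Set.InjOn fm (Finset.Icc 1 r) := by
    intro k hk k' hk' he
    simp only [Finset.coe_Icc, Set.mem_Icc] at hk hk'
    have : (c - k : ℤ) = (c - k' : ℤ) := by
      refine coe_inj ?_ he
      rw [abs_sub_lt_iff]
      omega
    omega
  have hdisj : Disjoint ((Finset.Icc 1 r).image fp) ((Finset.Icc 1 r).image fm) := by
    rw [Finset.disjoint_left]
    intro v hv hv'
    obtain ⟨k, hk, rfl⟩ := Finset.mem_image.mp hv
    obtain ⟨k', hk', he⟩ := Finset.mem_image.mp hv'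
    rw [Finset.mem_Icc] at hk hk'
    have he' : (some (i + ((c + k : ℤ) : ZMod n)) : Option (ZMod n))
        = some (i + ((c - k' : ℤ) : ZMod n)) := he.symm
    have : (c + k : ℤ) = (c - k' : ℤ) := coe_inj (by rw [abs_sub_lt_iff]; omega) he'
    omega
  set D : Finset (Option (ZMod n)) := (Finset.Icc 1 r).image fp ∪ (Finset.Icc 1 r).image fm
    with hD
  have hcardD : D.card = 2*r := by
    rw [hD, Finset.card_union_of_disjoint hdisj, Finset.card_image_of_injOn hinjp,
      Finset.card_image_of_injOn hinjm, Nat.card_Icc]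
    omega
  have hsumD : ∀ F : Option (ZMod n) → ℕ, ∑ v ∈ D, F v
      = ∑ k ∈ Finset.Icc 1 r, (F (fp k) + F (fm k)) := by
    intro F
    rw [hD, Finset.sum_union hdisj, Finset.sum_image (fun a ha b hb => hinjp ha hb),
      Finset.sum_image (fun a ha b hb => hinjm ha hb), ← Finset.sum_add_distrib]
  set A := D.powerset.filter (fun U => r + 1 ≤ U.card) with hA
  have step1 := pr_le_sum (V := Option (ZMod n)) h0 h1
    (S := {σw : Option (ZMod n) → Bool | r + 1 ≤ ∑ k ∈ Finset.Icc 1 r,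
      ((if σw (some (i + ((c + k : ℤ) : ZMod n))) then 1 else 0) +
       (if σw (some (i + ((c - k : ℤ) : ZMod n))) then 1 else 0) : ℕ)})
    A (fun U => {σ | ∀ v ∈ D, σ v = decide (v ∈ U)})
    (by
      intro σ hσ
      refine ⟨D.filter (fun v => σ v = true), ?_, ?_⟩
      · rw [hA, Finset.mem_filter, Finset.mem_powerset]
        refine ⟨Finset.filter_subset _ _, ?_⟩
        have hcf : (D.filter (fun v => σ v = true)).card
            = ∑ v ∈ D, (if σ v = true then 1 else 0) := by
          rw [Finset.card_filter]
        rw [hcf, hsumD]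
        exact hσ
      · intro v hv
        by_cases hσv : σ v = true
        · rw [hσv, eq_comm, decide_eq_true_eq]
          exact Finset.mem_filter.mpr ⟨hv, hσv⟩
        · have : σ v = false := by simpa using hσv
          rw [this, eq_comm, decide_eq_false_iff_not]
          intro hmem
          exact hσv (Finset.mem_filter.mp hmem).2
      )
  refine le_trans step1 ?_
  have hbnd : ∀ U ∈ A, pr q {σ : Option (ZMod n) → Bool | ∀ v ∈ D, σ v = decide (v ∈ U)}
      ≤ q^(r+1) * (1-q)^(r-1) := by
    intro U hU
    rw [hA, Finset.mem_filter, Finset.mem_powerset] at hU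
    obtain ⟨hUD, hUcard⟩ := hU
    rw [pr_cylinder h0 h1 D (fun v => decide (v ∈ U))]
    have e1 : ∏ v ∈ D, (if decide (v ∈ U) then q else 1 - q)
        = ∏ v ∈ D, (if v ∈ U then q else 1 - q) := by
      refine Finset.prod_congr rfl fun v _ => ?_
      by_cases hvU : v ∈ U <;> simp [hvU]
    rw [e1]
    rw [← Finset.prod_filter_mul_prod_filter_not D (fun v => v ∈ U)]
    have e2 : ∏ v ∈ D.filter (fun v => v ∈ U), (if v ∈ U then q else 1 - q) = q^(U.card) := by
      rw [Finset.prod_congr rfl (fun v hv => if_pos (Finset.mem_filter.mp hv).2),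
        Finset.prod_const]
      congr 1
      rw [Finset.filter_mem_eq_inter, Finset.inter_eq_right.mpr hUD]
    have e3 : ∏ v ∈ D.filter (fun v => ¬ v ∈ U), (if v ∈ U then q else 1 - q)
        = (1-q)^(D.card - U.card) := by
      rw [Finset.prod_congr rfl (fun v hv => if_neg (Finset.mem_filter.mp hv).2),
        Finset.prod_const]
      congr 1
      rw [Finset.filter_not, Finset.filter_mem_eq_inter, Finset.inter_eq_right.mpr hUD,
        Finset.card_sdiff_of_subset hUD]
    rw [e2, e3]
    -- now the numeric bound
    have hUle : U.card ≤ 2*r := hcardD ▸ Finset.card_le_card hUD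
    obtain ⟨s, hs⟩ : ∃ s, U.card = r + 1 + s := ⟨U.card - (r+1), by omega⟩
    have hsle : s ≤ r - 1 := by omega
    have hDU : D.card - U.card = (r - 1) - s := by rw [hcardD]; omega
    rw [hDU, hs]
    have hq1 : 0 ≤ 1 - q := by linarith
    have hqq : q ≤ 1 - q := by linarith
    calc q^(r+1+s) * (1-q)^(r-1-s)
        = q^(r+1) * (q^s * (1-q)^(r-1-s)) := by rw [pow_add]; ring
      _ ≤ q^(r+1) * ((1-q)^s * (1-q)^(r-1-s)) := by
          have := pow_le_pow_left₀ h0 hqq s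
          have hqp : 0 ≤ q^(r+1) := pow_nonneg h0 _
          have h2 : (0:ℝ) ≤ (1-q)^(r-1-s) := pow_nonneg hq1 _
          have h3 : q^s * (1-q)^(r-1-s) ≤ (1-q)^s * (1-q)^(r-1-s) :=
            mul_le_mul_of_nonneg_right this h2
          exact mul_le_mul_of_nonneg_left h3 hqp
      _ = q^(r+1) * (1-q)^(r-1) := by
          rw [← pow_add]
          congr 2
          omega
  calc ∑ U ∈ A, pr q {σ : Option (ZMod n) → Bool | ∀ v ∈ D, σ v = decide (v ∈ U)}
      ≤ ∑ _U ∈ A, q^(r+1) * (1-q)^(r-1) := Finset.sum_le_sum hbnd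
    _ = (A.card : ℝ) * (q^(r+1) * (1-q)^(r-1)) := by rw [Finset.sum_const, nsmul_eq_mul]
    _ ≤ 4^r * (q^(r+1) * (1-q)^(r-1)) := by
        have hAcard : A.card ≤ 4^r := by
          calc A.card ≤ D.powerset.card := by
                rw [hA]; exact Finset.card_filter_le _ _
            _ = 2^(2*r) := by rw [Finset.card_powerset, hcardD]
            _ = 4^r := by rw [pow_mul]; norm_num
        have hterm : (0:ℝ) ≤ q^(r+1) * (1-q)^(r-1) := by
          have hq1 : 0 ≤ 1 - q := by linarith
          positivity
        have : (A.card : ℝ) ≤ (4:ℝ)^r := by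
          exact_mod_cast hAcard
        exact mul_le_mul_of_nonneg_right this hterm
end Window

section PerVertex
variable {n : ℕ} [NeZero n]

lemma mono_term {q p : ℝ} (h0 : 0 ≤ q) (hqp : q ≤ p) (hp : p ≤ 1/2) {r : ℕ} (hr : 1 ≤ r) :
    q^(r+1) * (1-q)^(r-1) ≤ p^(r+1) * (1-p)^(r-1) := by
  have h2 : q*(1-q) ≤ p*(1-p) := by nlinarith
  have hq0 : (0:ℝ) ≤ q*(1-q) := by nlinarith
  have hp0 : (0:ℝ) ≤ p := by linarith
  have e : r + 1 = (r-1) + 2 := by omega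
  rw [e]
  calc q^((r-1)+2) * (1-q)^(r-1)
      = (q*(1-q))^(r-1) * q^2 := by rw [mul_pow, pow_add]; ring
    _ ≤ (p*(1-p))^(r-1) * p^2 := by
        have hpp0 : (0:ℝ) ≤ p*(1-p) := by nlinarith
        exact mul_le_mul (pow_le_pow_left₀ hq0 h2 _) (pow_le_pow_left₀ h0 hqp 2)
          (by positivity) (pow_nonneg hpp0 _)
    _ = p^((r-1)+2) * (1-p)^(r-1) := by rw [mul_pow, pow_add]; ring

lemma per_vertex {r m : ℕ} (hr : 1 ≤ r) (hm : 1 ≤ m)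
    (hn : 2 * (m * (r+1) + r) + 1 ≤ n)
    {q p : ℝ} (h0 : 0 ≤ q) (hqp : q ≤ p) (hp : p ≤ 1/2)
    (i : ZMod n) (T : ℕ) :
    pr q {σw : Option (ZMod n) → Bool |
        (ringStep n r)^[T] (fun j => σw (some j)) i = true}
      ≤ p + 2 / ((m : ℝ) * (1-p)^(r+1))
        + (2 * ((m * (r+1) : ℕ) : ℝ) + 1) * (4^r * (p^(r+1) * (1-p)^(r-1))) := by
  classical
  have h1 : q ≤ 1 := by linarith
  set vt : ℤ → Option (ZMod n) := fun d => some (i + (d : ZMod n)) with hvt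
  set W : ℤ := (m:ℤ)*((r:ℤ)+1) + r with hW
  have hW2n : 2*W < (n:ℤ) := by
    rw [hW]
    have : ((2 * (m * (r+1) + r) + 1 : ℕ) : ℤ) ≤ (n : ℤ) := by exact_mod_cast hn
    push_cast at this
    omega
  have hWpos : (0:ℤ) < W := by
    rw [hW]
    have : (1:ℤ) ≤ (m:ℤ) := by exact_mod_cast hm
    nlinarith
  have hinj : ∀ d d' : ℤ, |d - d'| < (n:ℤ) → vt d = vt d' → d = d' := by
    intro d d' hdd he
    have h2 : i + (d : ZMod n) = i + (d' : ZMod n) := Option.some_injective _ he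
    exact zmod_coe_inj hdd (add_left_cancel h2)
  set Block : ℤ → Finset (Option (ZMod n)) := fun c => (Finset.Icc c (c + r)).image vt
    with hBlock
  have hBcard : ∀ c : ℤ, (Block c).card = r + 1 := by
    intro c
    rw [hBlock]
    rw [Finset.card_image_of_injOn]
    · rw [Int.card_Icc]; omega
    · intro d hd d' hd' he
      simp only [Finset.coe_Icc, Set.mem_Icc] at hd hd'
      refine hinj d d' ?_ he
      rw [abs_sub_lt_iff]
      omega
  have hBdisj : ∀ c c' : ℤ, -W ≤ c → c' + r ≤ W → c + r < c' →
      Disjoint (Block c) (Block c') := by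
    intro c c' hc hc' hcc
    rw [Finset.disjoint_left]
    intro v hv hv'
    obtain ⟨d, hd, rfl⟩ := Finset.mem_image.mp hv
    obtain ⟨d', hd', he⟩ := Finset.mem_image.mp hv'
    rw [Finset.mem_Icc] at hd hd'
    have : d' = d := hinj d' d (by rw [abs_sub_lt_iff]; omega) he
    omega
  have hmul_lt : ∀ a b : ℕ, a < b → (a:ℤ)*((r:ℤ)+1) + r < (b:ℤ)*((r:ℤ)+1) := by
    intro a b hab
    have : (a:ℤ) + 1 ≤ (b:ℤ) := by exact_mod_cast hab
    nlinarith
  have hmul_ub : ∀ a : ℕ, a ≤ m → (a:ℤ)*((r:ℤ)+1) + r ≤ W := by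
    intro a ha
    have : (a:ℤ) ≤ (m:ℤ) := by exact_mod_cast ha
    rw [hW]
    nlinarith
  have hmul_lb : ∀ a : ℕ, 1 ≤ a → (1:ℤ) ≤ (a:ℤ)*((r:ℤ)+1) := by
    intro a ha
    have : (1:ℤ) ≤ (a:ℤ) := by exact_mod_cast ha
    nlinarith
  -- the four bad events
  set E1 : Set (Option (ZMod n) → Bool) := {σw | σw (some i) = true} with hE1
  set E2R : Set (Option (ZMod n) → Bool) :=
    {σw | ∀ a ∈ Finset.Icc 1 m, ∃ v ∈ Block ((a:ℤ)*((r:ℤ)+1)), σw v = true} with hE2R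
  set E2L : Set (Option (ZMod n) → Bool) :=
    {σw | ∀ a ∈ Finset.Icc 1 m, ∃ v ∈ Block (-((a:ℤ)*((r:ℤ)+1)) - r), σw v = true} with hE2L
  set M : ℤ := (m:ℤ)*((r:ℤ)+1) with hM
  set E3 : Set (Option (ZMod n) → Bool) :=
    {σw | ∃ c ∈ Finset.Icc (-M) M, r + 1 ≤ ∑ k ∈ Finset.Icc 1 r,
      ((if σw (some (i + ((c + k : ℤ) : ZMod n))) then 1 else 0) +
       (if σw (some (i + ((c - k : ℤ) : ZMod n))) then 1 else 0) : ℕ)} with hE3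
  -- inclusion into the union of bad events
  have hincl : ∀ σw ∈ {σw : Option (ZMod n) → Bool |
      (ringStep n r)^[T] (fun j => σw (some j)) i = true},
      ∃ j ∈ (Finset.univ : Finset (Fin 4)), σw ∈ (![E1, E2R, E2L, E3]) j := by
    intro σw hσ
    by_contra hno
    push_neg at hno
    have hn0 : σw ∉ E1 := by simpa using hno 0 (Finset.mem_univ _)
    have hn1 : σw ∉ E2R := by simpa using hno 1 (Finset.mem_univ _)
    have hn2 : σw ∉ E2L := by simpa using hno 2 (Finset.mem_univ _)
    have hn3 : σw ∉ E3 := by simpa using hno 3 (Finset.mem_univ _)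
    set σ : ZMod n → Bool := fun j => σw (some j) with hσdef
    have hσi : σ i = false := by
      rw [hE1] at hn0
      simp only [Set.mem_setOf_eq] at hn0
      simpa using hn0
    rw [hE2R] at hn1
    simp only [Set.mem_setOf_eq] at hn1
    push_neg at hn1
    obtain ⟨a, ha, hablock⟩ := hn1
    rw [hE2L] at hn2
    simp only [Set.mem_setOf_eq] at hn2
    push_neg at hn2
    obtain ⟨a', ha', hablock'⟩ := hn2
    rw [hE3] at hn3
    simp only [Set.mem_setOf_eq] at hn3
    push_neg at hn3
    have haIcc := Finset.mem_Icc.mp ha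
    have haIcc' := Finset.mem_Icc.mp ha'
    set ρR : ℤ := (a:ℤ)*((r:ℤ)+1) with hρR
    set ρL : ℤ := (a':ℤ)*((r:ℤ)+1) with hρL
    have hRich : (1:ℤ) ≤ ρR := hmul_lb a haIcc.1
    have hLich : (1:ℤ) ≤ ρL := hmul_lb a' haIcc'.1
    have hRub : ρR ≤ M := by
      rw [hρR, hM]
      have h1' : (a:ℤ) ≤ (m:ℤ) := by exact_mod_cast haIcc.2
      nlinarith
    have hLub : ρL ≤ M := by
      rw [hρL, hM]
      have h1' : (a':ℤ) ≤ (m:ℤ) := by exact_mod_cast haIcc'.2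
      nlinarith
    have hrunR : ∀ d ∈ Finset.Icc ρR (ρR + r), σ (i + (d : ZMod n)) = false := by
      intro d hd
      have : vt d ∈ Block ρR := Finset.mem_image.mpr ⟨d, hd, rfl⟩
      have := hablock (vt d) this
      simpa [hσdef, hvt] using this
    have hrunL : ∀ d ∈ Finset.Icc (-(ρL + r)) (-ρL), σ (i + (d : ZMod n)) = false := by
      intro d hd
      rw [Finset.mem_Icc] at hd
      have hd2 : d ∈ Finset.Icc (-ρL - r) (-ρL - r + r) := by
        rw [Finset.mem_Icc]; omega
      have : vt d ∈ Block (-ρL - r) := Finset.mem_image.mpr ⟨d, hd2, rfl⟩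
      have := hablock' (vt d) this
      simpa [hσdef, hvt] using this
    have hwin : ∀ c ∈ Finset.Icc (1 - ρL) (ρR - 1),
        (∑ k ∈ Finset.Icc 1 r,
          ((if σ (i + ((c + k : ℤ) : ZMod n)) then 1 else 0) +
           (if σ (i + ((c - k : ℤ) : ZMod n)) then 1 else 0)) : ℕ) ≤ r := by
      intro c hc
      rw [Finset.mem_Icc] at hc
      have hcM : c ∈ Finset.Icc (-M) M := by rw [Finset.mem_Icc]; omega
      have h5 := hn3 c hcM
      simp only [hσdef]
      omega
    have hstable := stable n r σ i ρL ρR hLich hRich hrunR hrunL hwin T 0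
      (by rw [Finset.mem_Icc]; omega)
      (by
        have : i + ((0:ℤ) : ZMod n) = i := by
          norm_num
        rw [this]; exact hσi)
    have : i + ((0:ℤ) : ZMod n) = i := by norm_num
    rw [this] at hstable
    simp only [Set.mem_setOf_eq] at hσ
    rw [hσ] at hstable
    simp at hstable
  have hunion := pr_le_sum h0 h1 (Finset.univ : Finset (Fin 4)) (![E1, E2R, E2L, E3]) hincl
  rw [Fin.sum_univ_four] at hunion
  simp only [Matrix.cons_val_zero, Matrix.cons_val_one, Matrix.head_cons,
    Matrix.cons_val_two, Matrix.tail_cons, Matrix.cons_val_three] at hunion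
  -- bound each event
  have hb1 : pr q E1 ≤ p := by
    have he : E1 = {σ : Option (ZMod n) → Bool |
        ∀ v ∈ ({some i} : Finset (Option (ZMod n))), σ v = (fun _ => true) v} := by
      rw [hE1]; ext σ; simp
    rw [he, pr_cylinder h0 h1]
    simp only [Finset.prod_singleton, if_pos]
    linarith
  have hqb_pos : (0:ℝ) < (m:ℝ) * (1-p)^(r+1) := by
    have hm' : (0:ℝ) < (m:ℝ) := by exact_mod_cast hm
    have : (0:ℝ) < 1 - p := by linarith
    positivity
  have hXpq : (m:ℝ) * (1-p)^(r+1) ≤ (m:ℝ) * (1-q)^(r+1) := by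
    have hm0 : (0:ℝ) ≤ (m:ℝ) := by positivity
    refine mul_le_mul_of_nonneg_left ?_ hm0
    exact pow_le_pow_left₀ (by linarith) (by linarith) _
  have cheb : ∀ (Tf : ℕ → Finset (Option (ZMod n))),
      (∀ a ∈ Finset.Icc 1 m, (Tf a).card = r + 1) →
      (∀ a ∈ Finset.Icc 1 m, ∀ b ∈ Finset.Icc 1 m, a ≠ b → Disjoint (Tf a) (Tf b)) →
      pr q {σ : Option (ZMod n) → Bool | ∀ a ∈ Finset.Icc 1 m, ∃ v ∈ Tf a, σ v = true}
        ≤ 1 / ((m:ℝ) * (1-p)^(r+1)) := by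
    intro Tf hc hd
    have := pr_no_allfalse h0 h1 (Finset.Icc 1 m) Tf (r+1) hc hd
    rw [Nat.card_Icc] at this
    have hmm : m + 1 - 1 = m := by omega
    rw [hmm] at this
    have hprn := pr_nonneg h0 h1
      {σ : Option (ZMod n) → Bool | ∀ a ∈ Finset.Icc 1 m, ∃ v ∈ Tf a, σ v = true}
    rw [le_div_iff₀ hqb_pos]
    calc pr q {σ : Option (ZMod n) → Bool | ∀ a ∈ Finset.Icc 1 m, ∃ v ∈ Tf a, σ v = true}
          * ((m:ℝ) * (1-p)^(r+1))
        ≤ pr q {σ : Option (ZMod n) → Bool | ∀ a ∈ Finset.Icc 1 m, ∃ v ∈ Tf a, σ v = true}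
          * ((m:ℝ) * (1-q)^(r+1)) := by
          exact mul_le_mul_of_nonneg_left hXpq hprn
      _ ≤ 1 := by rw [mul_comm]; exact this
  have hb2R : pr q E2R ≤ 1 / ((m:ℝ) * (1-p)^(r+1)) := by
    rw [hE2R]
    refine cheb _ (fun a _ => hBcard _) ?_
    intro a ha b hb hab
    have haI := Finset.mem_Icc.mp ha
    have hbI := Finset.mem_Icc.mp hb
    rcases Nat.lt_or_ge a b with hlt | hge
    · exact hBdisj _ _ (by have := hmul_lb a haI.1; omega)
        (hmul_ub b hbI.2) (hmul_lt a b hlt)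
    · have hlt : b < a := by omega
      exact (hBdisj _ _ (by have := hmul_lb b hbI.1; omega)
        (hmul_ub a haI.2) (hmul_lt b a hlt)).symm
  have hb2L : pr q E2L ≤ 1 / ((m:ℝ) * (1-p)^(r+1)) := by
    rw [hE2L]
    refine cheb _ (fun a _ => hBcard _) ?_
    intro a ha b hb hab
    have haI := Finset.mem_Icc.mp ha
    have hbI := Finset.mem_Icc.mp hb
    rcases Nat.lt_or_ge a b with hlt | hge
    · refine (hBdisj _ _ ?_ ?_ ?_).symm
      · have := hmul_ub b hbI.2; omega
      · have := hmul_lb a haI.1; have := hmul_ub a haI.2; omega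
      · have := hmul_lt a b hlt; omega
    · have hlt : b < a := by omega
      refine hBdisj _ _ ?_ ?_ ?_
      · have := hmul_ub a haI.2; omega
      · have := hmul_lb b hbI.1; have := hmul_ub b hbI.2; omega
      · have := hmul_lt b a hlt; omega
  have hb3 : pr q E3 ≤ (2 * ((m * (r+1) : ℕ) : ℝ) + 1) * (4^r * (p^(r+1) * (1-p)^(r-1))) := by
    have hstep := pr_le_sum h0 h1 (S := E3) (Finset.Icc (-M) M)
      (fun c => {σw : Option (ZMod n) → Bool | r + 1 ≤ ∑ k ∈ Finset.Icc 1 r,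
        ((if σw (some (i + ((c + k : ℤ) : ZMod n))) then 1 else 0) +
         (if σw (some (i + ((c - k : ℤ) : ZMod n))) then 1 else 0) : ℕ)})
      (by
        intro σ hσ
        rw [hE3] at hσ
        obtain ⟨c, hc, hcw⟩ := hσ
        exact ⟨c, hc, hcw⟩)
    refine le_trans hstep ?_
    have hbd : ∀ c ∈ Finset.Icc (-M) M,
        pr q {σw : Option (ZMod n) → Bool | r + 1 ≤ ∑ k ∈ Finset.Icc 1 r,
        ((if σw (some (i + ((c + k : ℤ) : ZMod n))) then 1 else 0) +
         (if σw (some (i + ((c - k : ℤ) : ZMod n))) then 1 else 0) : ℕ)}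
        ≤ 4^r * (p^(r+1) * (1-p)^(r-1)) := by
      intro c _
      have h2rn : 2*r < n := by
        have : (2*(r:ℤ)) < (n:ℤ) := by
          have h1' : (1:ℤ) ≤ (m:ℤ) := by exact_mod_cast hm
          rw [hW] at hW2n
          nlinarith
        exact_mod_cast this
      refine le_trans (pr_window hr h2rn h0 (by linarith) i c) ?_
      have h4 : (0:ℝ) ≤ 4^r := by positivity
      exact mul_le_mul_of_nonneg_left (mono_term h0 hqp hp hr) h4
    calc ∑ c ∈ Finset.Icc (-M) M, pr q _
        ≤ ∑ _c ∈ Finset.Icc (-M) M, 4^r * (p^(r+1) * (1-p)^(r-1)) := Finset.sum_le_sum hbd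
      _ = ((Finset.Icc (-M) M).card : ℝ) * (4^r * (p^(r+1) * (1-p)^(r-1))) := by
          rw [Finset.sum_const, nsmul_eq_mul]
      _ = (2 * ((m * (r+1) : ℕ) : ℝ) + 1) * (4^r * (p^(r+1) * (1-p)^(r-1))) := by
          congr 1
          rw [Int.card_Icc]
          have : (M + 1 - -M).toNat = 2 * (m * (r+1)) + 1 := by
            rw [hM]
            have : ((m * (r+1) : ℕ) : ℤ) = (m:ℤ) * ((r:ℤ)+1) := by push_cast; ring
            omega
          rw [this]
          push_cast
          ring
  calc pr q {σw : Option (ZMod n) → Bool |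
        (ringStep n r)^[T] (fun j => σw (some j)) i = true}
      ≤ pr q E1 + pr q E2R + pr q E2L + pr q E3 := hunion
    _ ≤ p + 1 / ((m:ℝ) * (1-p)^(r+1)) + 1 / ((m:ℝ) * (1-p)^(r+1))
        + (2 * ((m * (r+1) : ℕ) : ℝ) + 1) * (4^r * (p^(r+1) * (1-p)^(r-1))) := by
        have h6 := add_le_add (add_le_add (add_le_add hb1 hb2R) hb2L) hb3
        linarith
    _ = p + 2 / ((m:ℝ) * (1-p)^(r+1))
        + (2 * ((m * (r+1) : ℕ) : ℝ) + 1) * (4^r * (p^(r+1) * (1-p)^(r-1))) := by ring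
end PerVertex

section Part4

/-- all-ones percolates, hence `pW r 1 n = 1` for positive `n` -/
lemma pW_one (r : ℕ) {n : ℕ} (hn : n ≠ 0) : pW r 1 n = 1 := by
  rw [pW, dif_neg hn]
  haveI : NeZero n := ⟨hn⟩
  unfold pr
  rw [Finset.sum_eq_single (fun _ => true)]
  · have hmem : (fun _ => true) ∈ {σ : Option (ZMod n) → Bool | ∀ v, wheelFix n r σ v = true} :=
      fun v => ring_top n r (n+1) v
    rw [Set.indicator_of_mem hmem]
    simp
  · intro σ _ hσ
    have : ∃ v, σ v ≠ true := by
      by_contra hc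
      push_neg at hc
      exact hσ (funext fun v => hc v)
    obtain ⟨v₀, hv₀⟩ := this
    have hz : (∏ v, (if σ v then (1:ℝ) else 1 - 1)) = 0 := by
      refine Finset.prod_eq_zero (Finset.mem_univ v₀) ?_
      rw [if_neg hv₀]
      ring
    by_cases hmem : σ ∈ {σ : Option (ZMod n) → Bool | ∀ v, wheelFix n r σ v = true}
    · rw [Set.indicator_of_mem hmem]
      exact hz
    · rw [Set.indicator_of_notMem hmem]
  · intro h
    exact absurd (Finset.mem_univ _) h

lemma one_mem_percset (r : ℕ) :
    (1:ℝ) ∈ {p : ℝ | p ∈ Set.Icc (0:ℝ) 1 ∧ Filter.liminf (fun n => pW r p n) Filter.atTop = 1} := by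
  refine ⟨⟨zero_le_one, le_refl 1⟩, ?_⟩
  have hev : ∀ᶠ n in Filter.atTop, pW r 1 n = (fun _ : ℕ => (1:ℝ)) n := by
    filter_upwards [Filter.eventually_ge_atTop 1] with n hn
    exact pW_one r (by omega)
  rw [Filter.liminf_congr hev, Filter.liminf_const]

lemma percset_bddBelow (r : ℕ) :
    BddBelow {p : ℝ | p ∈ Set.Icc (0:ℝ) 1 ∧ Filter.liminf (fun n => pW r p n) Filter.atTop = 1} :=
  ⟨0, fun x hx => hx.1.1⟩

lemma pcPlus_le_one (r : ℕ) : pcPlus r ≤ 1 :=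
  csInf_le (percset_bddBelow r) (one_mem_percset r)

lemma pcPlus_nonneg (r : ℕ) : 0 ≤ pcPlus r :=
  le_csInf ⟨1, one_mem_percset r⟩ fun x hx => hx.1.1

/-- main quantitative estimate on the percolation probability -/
lemma pW_le {r m : ℕ} (hr : 1 ≤ r) (hm : 1 ≤ m) {n : ℕ} (hn : 2 * (m * (r+1) + r) + 1 ≤ n)
    {q p : ℝ} (h0 : 0 ≤ q) (hqp : q ≤ p) (hp : p ≤ 1/2) (hp0 : 0 ≤ p) :
    pW r q n ≤ p + 2 * (p + 2 / ((m : ℝ) * (1-p)^(r+1))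
        + (2 * ((m * (r+1) : ℕ) : ℝ) + 1) * (4^r * (p^(r+1) * (1-p)^(r-1)))) := by
  have hn0 : n ≠ 0 := by omega
  haveI : NeZero n := ⟨hn0⟩
  have h1 : q ≤ 1 := by linarith
  rw [pW, dif_neg hn0]
  set B : ℝ := p + 2 / ((m : ℝ) * (1-p)^(r+1))
        + (2 * ((m * (r+1) : ℕ) : ℝ) + 1) * (4^r * (p^(r+1) * (1-p)^(r-1))) with hB
  have hB0 : 0 ≤ B := by
    rw [hB]
    have hm0 : (0:ℝ) < (m:ℝ) := by exact_mod_cast hm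
    have hp1 : (0:ℝ) < 1 - p := by linarith
    have t1 : (0:ℝ) ≤ 2 / ((m : ℝ) * (1-p)^(r+1)) := by positivity
    have t2 : (0:ℝ) ≤ (2 * ((m * (r+1) : ℕ) : ℝ) + 1) * (4^r * (p^(r+1) * (1-p)^(r-1))) := by
      positivity
    linarith
  set Ec : Set (Option (ZMod n) → Bool) := {σw | σw none = true} with hEc
  set Ecnt : Set (Option (ZMod n) → Bool) := {σw | (n:ℝ) + 1 ≤ 2 * ((Finset.univ.filter
      (fun i : ZMod n => (ringStep n r)^[n] (fun j => σw (some j)) i = true)).card : ℝ)} with hEcnt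
  have hincl : ∀ σw ∈ {σw : Option (ZMod n) → Bool | ∀ v, wheelFix n r σw v = true},
      ∃ j ∈ (Finset.univ : Finset (Fin 2)), σw ∈ (![Ec, Ecnt]) j := by
    intro σw hσ
    by_contra hno
    push_neg at hno
    have hnc : σw ∉ Ec := by simpa using hno 0 (Finset.mem_univ _)
    have hncnt : σw ∉ Ecnt := by simpa using hno 1 (Finset.mem_univ _)
    have hc : σw none = false := by
      rw [hEc] at hnc; simpa using hnc
    have hcnt : 2 * ((Finset.univ.filter
        (fun i : ZMod n => (ringStep n r)^[n] (fun j => σw (some j)) i = true)).card) ≤ n := by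
      rw [hEcnt] at hncnt
      simp only [Set.mem_setOf_eq, not_le] at hncnt
      have := hncnt
      have h2 : (2 * ((Finset.univ.filter
          (fun i : ZMod n => (ringStep n r)^[n] (fun j => σw (some j)) i = true)).card) : ℝ)
          < (n:ℝ) + 1 := by push_cast; push_cast at this; linarith
      have h3 : (2 * ((Finset.univ.filter
          (fun i : ZMod n => (ringStep n r)^[n] (fun j => σw (some j)) i = true)).card) : ℕ)
          < n + 1 := by exact_mod_cast h2
      omega
    have H : ∀ t, t ≤ n → 2 * (Finset.univ.filter
        (fun i : ZMod n => (ringStep n r)^[t] (fun j => σw (some j)) i = true)).card ≤ n := by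
      intro t ht
      have hsub : (Finset.univ.filter
          (fun i : ZMod n => (ringStep n r)^[t] (fun j => σw (some j)) i = true))
          ⊆ (Finset.univ.filter
          (fun i : ZMod n => (ringStep n r)^[n] (fun j => σw (some j)) i = true)) := by
        intro x hx
        rw [Finset.mem_filter] at hx ⊢
        exact ⟨hx.1, ringIter_mono' n r _ ht x hx.2⟩
      have := Finset.card_le_card hsub
      omega
    have := (wheel_coupling n r σw hc H (n+1) (le_refl _)).1
    have hperc := hσ none
    rw [wheelFix] at hperc
    rw [hperc] at this
    exact absurd this (by simp)
  have hunion := pr_le_sum h0 h1 (Finset.univ : Finset (Fin 2)) (![Ec, Ecnt]) hincl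
  rw [Fin.sum_univ_two] at hunion
  simp only [Matrix.cons_val_zero, Matrix.cons_val_one, Matrix.head_cons] at hunion
  have hbc : pr q Ec ≤ p := by
    have he : Ec = {σ : Option (ZMod n) → Bool |
        ∀ v ∈ ({none} : Finset (Option (ZMod n))), σ v = (fun _ => true) v} := by
      rw [hEc]; ext σ; simp
    rw [he, pr_cylinder h0 h1]
    simp only [Finset.prod_singleton, if_pos]
    linarith
  have hbcnt : pr q Ecnt ≤ 2 * B := by
    have hmark := pr_markov h0 h1 (S := Ecnt)
      (fun σw => 2 * ((Finset.univ.filter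
        (fun i : ZMod n => (ringStep n r)^[n] (fun j => σw (some j)) i = true)).card : ℝ))
      (fun σw => by positivity)
      (show (0:ℝ) < (n:ℝ) + 1 by positivity)
      (fun σw hσ => hσ)
    refine le_trans hmark ?_
    have hsum : ∑ σw : Option (ZMod n) → Bool,
        (2 * ((Finset.univ.filter
          (fun i : ZMod n => (ringStep n r)^[n] (fun j => σw (some j)) i = true)).card : ℝ))
          * wgt q σw
        = 2 * ∑ i : ZMod n, pr q {σw : Option (ZMod n) → Bool |
            (ringStep n r)^[n] (fun j => σw (some j)) i = true} := by
      have e1 : ∀ σw : Option (ZMod n) → Bool,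
          (((Finset.univ.filter
            (fun i : ZMod n => (ringStep n r)^[n] (fun j => σw (some j)) i = true)).card : ℝ))
          = ∑ i : ZMod n, (if (ringStep n r)^[n] (fun j => σw (some j)) i = true
              then (1:ℝ) else 0) := by
        intro σw
        rw [Finset.card_filter]
        push_cast
        rfl
      calc ∑ σw : Option (ZMod n) → Bool, (2 * ((Finset.univ.filter
            (fun i : ZMod n => (ringStep n r)^[n] (fun j => σw (some j)) i = true)).card : ℝ))
            * wgt q σw
          = 2 * ∑ σw : Option (ZMod n) → Bool, ∑ i : ZMod n,
            (if (ringStep n r)^[n] (fun j => σw (some j)) i = true then (1:ℝ) else 0)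
              * wgt q σw := by
            rw [Finset.mul_sum]
            refine Finset.sum_congr rfl fun σw _ => ?_
            rw [e1 σw, mul_assoc, Finset.sum_mul]
        _ = 2 * ∑ i : ZMod n, ∑ σw : Option (ZMod n) → Bool,
            (if (ringStep n r)^[n] (fun j => σw (some j)) i = true then (1:ℝ) else 0)
              * wgt q σw := by rw [Finset.sum_comm]
        _ = 2 * ∑ i : ZMod n, pr q {σw : Option (ZMod n) → Bool |
            (ringStep n r)^[n] (fun j => σw (some j)) i = true} := by
            congr 1
            refine Finset.sum_congr rfl fun i _ => ?_
            rw [pr_def]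
            refine Finset.sum_congr rfl fun σw _ => ?_
            by_cases hmem : (ringStep n r)^[n] (fun j => σw (some j)) i = true
            · rw [if_pos hmem, one_mul, Set.indicator_of_mem
                (show σw ∈ {σw : Option (ZMod n) → Bool |
                  (ringStep n r)^[n] (fun j => σw (some j)) i = true} from hmem)]
            · rw [if_neg hmem, zero_mul, eq_comm, Set.indicator_apply_eq_zero]
              intro hmem2
              exact absurd hmem2 hmem
    rw [hsum]
    have hper : ∀ i : ZMod n, pr q {σw : Option (ZMod n) → Bool |
        (ringStep n r)^[n] (fun j => σw (some j)) i = true} ≤ B :=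
      fun i => per_vertex hr hm hn h0 hqp hp i n
    have hsumle : ∑ i : ZMod n, pr q {σw : Option (ZMod n) → Bool |
        (ringStep n r)^[n] (fun j => σw (some j)) i = true} ≤ (n:ℝ) * B := by
      calc ∑ i : ZMod n, pr q {σw : Option (ZMod n) → Bool |
          (ringStep n r)^[n] (fun j => σw (some j)) i = true}
          ≤ ∑ _i : ZMod n, B := Finset.sum_le_sum fun i _ => hper i
        _ = (n:ℝ) * B := by
            rw [Finset.sum_const, nsmul_eq_mul, Finset.card_univ, ZMod.card n]
    calc ((n:ℝ) + 1)⁻¹ * (2 * ∑ i : ZMod n, pr q {σw : Option (ZMod n) → Bool |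
            (ringStep n r)^[n] (fun j => σw (some j)) i = true})
        ≤ ((n:ℝ) + 1)⁻¹ * (2 * ((n:ℝ) * B)) := by
          have hinv : (0:ℝ) ≤ ((n:ℝ) + 1)⁻¹ := by positivity
          refine mul_le_mul_of_nonneg_left ?_ hinv
          linarith
      _ ≤ 2 * B := by
          have hnn : (0:ℝ) < (n:ℝ) + 1 := by positivity
          rw [inv_mul_le_iff₀ hnn]
          nlinarith [hB0]
  calc pr q {σw : Option (ZMod n) → Bool | ∀ v, wheelFix n r σw v = true}
      ≤ pr q Ec + pr q Ecnt := hunion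
    _ ≤ p + 2 * B := by linarith
end Part4

section Final
open Filter

lemma pW_nonneg (r : ℕ) {x : ℝ} (h0 : 0 ≤ x) (h1 : x ≤ 1) (n : ℕ) : 0 ≤ pW r x n := by
  rw [pW]
  split
  · exact le_refl 0
  · rename_i hn
    haveI : NeZero n := ⟨hn⟩
    exact pr_nonneg h0 h1 _

set_option maxHeartbeats 1000000 in
lemma pcPlus_ge {ε : ℝ} (hε0 : 0 < ε) (hε : ε < 1/4) :
    ∃ r₀ : ℕ, ∀ r : ℕ, r₀ ≤ r → 1/4 - ε ≤ pcPlus r := by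
  set p : ℝ := 1/4 - ε with hpdef
  have hp0 : 0 < p := by rw [hpdef]; linarith
  have hp14 : p < 1/4 := by rw [hpdef]; linarith
  have hp12 : p ≤ 1/2 := by linarith
  have h1p : (0:ℝ) < 1 - p := by rw [hpdef]; linarith
  have h1p1 : 1 - p ≤ 1 := by linarith
  -- the window term tends to zero
  have htend : Tendsto (fun r : ℕ => ((r:ℝ)+1) * (4*p)^r) atTop (nhds 0) := by
    have h4p0 : (0:ℝ) ≤ 4*p := by rw [hpdef]; linarith
    have h4p1 : 4*p < 1 := by rw [hpdef]; linarith
    have t1 := tendsto_self_mul_const_pow_of_lt_one h4p0 h4p1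
    have t2 := tendsto_pow_atTop_nhds_zero_of_lt_one h4p0 h4p1
    have := t1.add t2
    rw [add_zero] at this
    convert this using 2 with r
    ring
  set C : ℝ := 257 * p / (1-p)^2 with hC
  have hC0 : 0 < C := by rw [hC]; positivity
  have hδ : (0:ℝ) < (1/32)/C := by positivity
  have hev1 := htend.eventually_le_const hδ
  rw [Filter.eventually_atTop] at hev1
  obtain ⟨r₁, hr₁⟩ := hev1
  refine ⟨max r₁ 1, fun r hrge => ?_⟩
  have hr1 : 1 ≤ r := le_trans (le_max_right _ _) hrge
  have hrr1 : r₁ ≤ r := le_trans (le_max_left _ _) hrge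
  -- the block count
  set x : ℝ := ((1-p)^(r+1))⁻¹ with hx
  have hqbpos : (0:ℝ) < (1-p)^(r+1) := by positivity
  have hx1 : (1:ℝ) ≤ x := by
    rw [hx]
    rw [one_le_inv_iff₀]
    exact ⟨hqbpos, pow_le_one₀ (le_of_lt h1p) h1p1⟩
  set m : ℕ := 64 * Nat.ceil x with hm
  have hm1 : 1 ≤ m := by
    rw [hm]
    have : 1 ≤ Nat.ceil x := by
      rw [Nat.one_le_ceil_iff]
      linarith
    omega
  have hmx : 64 * x ≤ (m:ℝ) := by
    rw [hm]
    push_cast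
    have := Nat.le_ceil x
    nlinarith
  have hmub : (m:ℝ) ≤ 128 * x := by
    rw [hm]
    push_cast
    have h2 := Nat.ceil_lt_add_one (show (0:ℝ) ≤ x by linarith)
    nlinarith
  -- chebyshev term bound
  have hcheb : 2 / ((m : ℝ) * (1-p)^(r+1)) ≤ 1/32 := by
    have hxqb : x * (1-p)^(r+1) = 1 := by
      rw [hx]; field_simp
    have h64 : (64:ℝ) ≤ (m:ℝ) * (1-p)^(r+1) := by
      calc (64:ℝ) = 64 * (x * (1-p)^(r+1)) := by rw [hxqb]; ring
        _ = (64 * x) * (1-p)^(r+1) := by ring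
        _ ≤ (m:ℝ) * (1-p)^(r+1) := by
            exact mul_le_mul_of_nonneg_right hmx (le_of_lt hqbpos)
    rw [div_le_iff₀ (by linarith)]
    linarith
  -- window term bound
  have hwin : (2 * ((m * (r+1) : ℕ) : ℝ) + 1) * (4^r * (p^(r+1) * (1-p)^(r-1))) ≤ 1/32 := by
    have hsplit : (1-p)^(r+1) = (1-p)^(r-1) * (1-p)^2 := by
      rw [← pow_add]
      congr 1
      omega
    have ha : ((1-p)^(r-1) : ℝ) ≠ 0 := pow_ne_zero _ (ne_of_gt h1p)
    have hkey : x * (1-p)^(r-1) = ((1-p)^2)⁻¹ := by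
      rw [hx, hsplit, mul_inv, mul_comm ((1-p)^(r-1))⁻¹ (((1-p)^2)⁻¹ : ℝ), mul_assoc,
        inv_mul_cancel₀ ha, mul_one]
    have hcnt : (2 * ((m * (r+1) : ℕ) : ℝ) + 1) ≤ 257 * x * ((r:ℝ)+1) := by
      push_cast
      have hxr : 1 ≤ x * ((r:ℝ)+1) := by
        have h8 : (1:ℝ) ≤ (r:ℝ)+1 := by
          have := Nat.cast_nonneg (α := ℝ) r
          linarith
        nlinarith
      have h7 : (m:ℝ) * ((r:ℝ)+1) ≤ 128 * x * ((r:ℝ)+1) :=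
        mul_le_mul_of_nonneg_right hmub (by positivity)
      push_cast at h7
      nlinarith [h7, hxr]
    have hterm0 : (0:ℝ) ≤ 4^r * (p^(r+1) * (1-p)^(r-1)) := by positivity
    calc (2 * ((m * (r+1) : ℕ) : ℝ) + 1) * (4^r * (p^(r+1) * (1-p)^(r-1)))
        ≤ (257 * x * ((r:ℝ)+1)) * (4^r * (p^(r+1) * (1-p)^(r-1))) :=
          mul_le_mul_of_nonneg_right hcnt hterm0
      _ = 257 * ((r:ℝ)+1) * (4^r * p^(r+1)) * (x * (1-p)^(r-1)) := by ring
      _ = 257 * ((r:ℝ)+1) * (p * (4*p)^r) * ((1-p)^2)⁻¹ := by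
          rw [hkey]
          have e1 : (4:ℝ)^r * p^(r+1) = p * (4*p)^r := by
            rw [mul_pow, pow_succ]
            ring
          rw [e1]
      _ = C * (((r:ℝ)+1) * (4*p)^r) := by
          rw [hC]
          have ha2 : ((1-p)^2 : ℝ) ≠ 0 := by positivity
          field_simp
      _ ≤ C * ((1/32)/C) := by
          exact mul_le_mul_of_nonneg_left (hr₁ r hrr1) (le_of_lt hC0)
      _ = 1/32 := by field_simp
  -- now the inf bound
  refine le_csInf ⟨1, one_mem_percset r⟩ ?_
  rintro y ⟨⟨hy0, hy1⟩, hylim⟩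
  by_contra hlt
  push_neg at hlt
  have hyp : y ≤ p := le_of_lt hlt
  -- percolation probability bound for large n
  have hbound : ∀ n : ℕ, 2 * (m * (r+1) + r) + 1 ≤ n → pW r y n ≤ 7/8 := by
    intro n hn
    have := pW_le (q := y) (p := p) hr1 hm1 hn hy0 hyp hp12 (le_of_lt hp0)
    calc pW r y n ≤ p + 2 * (p + 2 / ((m : ℝ) * (1-p)^(r+1))
        + (2 * ((m * (r+1) : ℕ) : ℝ) + 1) * (4^r * (p^(r+1) * (1-p)^(r-1)))) := this
      _ ≤ p + 2 * (p + 1/32 + 1/32) := by linarith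
      _ ≤ 7/8 := by rw [hpdef]; linarith
  have hfreq : ∃ᶠ n in atTop, pW r y n ≤ 7/8 := by
    refine Filter.Eventually.frequently ?_
    filter_upwards [Filter.eventually_ge_atTop (2 * (m * (r+1) + r) + 1)] with n hn
    exact hbound n hn
  have hbdd : Filter.IsBoundedUnder (· ≥ ·) atTop (fun n => pW r y n) :=
    Filter.isBoundedUnder_of ⟨0, fun n => pW_nonneg r hy0 hy1 n⟩
  have := Filter.liminf_le_of_frequently_le hfreq hbdd
  rw [hylim] at this
  linarith
end Final



/-- `liminf_{r→∞} p_c^+(WH(r)) ≥ 1/4`. -/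
theorem pcPlus_liminf_ge :
    (1 / 4 : ℝ) ≤ Filter.liminf (fun r : ℕ => pcPlus r) Filter.atTop := by
  by_contra hlt
  push_neg at hlt
  set L := Filter.liminf (fun r : ℕ => pcPlus r) Filter.atTop with hL
  have hcob : Filter.IsCoboundedUnder (· ≥ ·) Filter.atTop (fun r : ℕ => pcPlus r) :=
    Filter.IsBoundedUnder.isCoboundedUnder_ge
      (Filter.isBoundedUnder_of ⟨1, fun r => pcPlus_le_one r⟩)
  have hL0 : 0 ≤ L := by
    rw [hL]
    exact Filter.le_liminf_of_le hcob
      (Filter.Eventually.of_forall fun r => pcPlus_nonneg r)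
  set ε : ℝ := (1/4 - L)/2 with hε
  have hε0 : 0 < ε := by rw [hε]; linarith
  have hεlt : ε < 1/4 := by rw [hε]; linarith
  obtain ⟨r₀, hr₀⟩ := pcPlus_ge hε0 hεlt
  have : 1/4 - ε ≤ L := by
    rw [hL]
    refine Filter.le_liminf_of_le hcob ?_
    filter_upwards [Filter.eventually_ge_atTop r₀] with r hr
    exact hr₀ r hr
  rw [hε] at this
  linarith
end

section
/- For every positive integer r, with ℓ = 2r+1, the cardinality of T_r is at most the cardinality of S_{ℓ,r}: |T_r| ≤ |S_{ℓ,r}|. -/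
open Finset


/-- `W_{ℓ,r}`: the set of 0-1 words of length `ℓ` containing `r+1` consecutive `0`s. -/
def Wword (ℓ r : ℕ) : Set (Fin ℓ → Bool) :=
  {v | ∃ i : ℕ, ∃ h : i + (r + 1) ≤ ℓ, ∀ j : ℕ, ∀ hj : j < r + 1,
    v ⟨i + j, by omega⟩ = false}

/-- `S_{ℓ,r}`: the set of 0-1 words of length `ℓ` with no `r+1` consecutive `0`s such that,
when a block of `ℓ` consecutive vertices of the ring `C_n(r)` is initialized with the word,
then whatever the initial states of the remaining vertices, all vertices of the block are
active at the fixed point of strict MBP. -/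
def Sspread (ℓ r : ℕ) : Set (Fin ℓ → Bool) :=
  {v | v ∉ Wword ℓ r ∧
    ∀ n : ℕ, 2 * r + 1 < n → ℓ ≤ n → ∀ c : ZMod n, ∀ σ : ZMod n → Bool,
      (∀ i : Fin ℓ, σ (c + ((i : ℕ) : ZMod n)) = v i) →
      ∀ i : Fin ℓ, ringFix n r σ (c + ((i : ℕ) : ZMod n)) = true}

/-- Strict majority update applied to the single vertex `i` of `C_n(r)`. -/
def updAt (n r : ℕ) (σ : ZMod n → Bool) (i : ZMod n) : ZMod n → Bool :=
  fun j => if j = i then σ i || decide (r + 1 ≤ activeNbrs n r σ i) else σ j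

/-- Apply the strict majority update successively (in this order) to the vertices
`c + r, c + r + 1, …, c + 2r − 1` of `C_n(r)`. -/
def seqUpd (n r : ℕ) (c : ZMod n) (σ : ZMod n → Bool) : ZMod n → Bool :=
  (List.range r).foldl (fun τ k => updAt n r τ (c + ((r + k : ℕ) : ZMod n))) σ


/-- Weight function `ω` on the alphabet `{0,1}²`: `ω(0,0) = +1`, `ω(1,1) = −1`,
and `ω(a,b) = 0` otherwise. -/
def dyckWt (a b : Bool) : ℤ :=
  if a = false ∧ b = false then 1 else if a = true ∧ b = true then -1 else 0

open Fin.NatCast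

/-- `T_r`: binary words `v` of length `2r+1` with exactly `r+1` ones and `r` zeros,
`v_0 = v_{2r} = 1`, `v_r = 0`, and such that the word `w_1 ⋯ w_{r−1}` over `{0,1}²`
with `w_i = (v_i, v_{i+r})` is a generalized Dyck word for the weight `dyckWt`:
every prefix sum of weights is nonnegative, and the total sum is `0`. -/
def Tset (r : ℕ) : Set (Fin (2 * r + 1) → Bool) :=
  {v | (Finset.univ.filter (fun i => v i = true)).card = r + 1 ∧
       (Finset.univ.filter (fun i => v i = false)).card = r ∧
       v ((0 : ℕ) : Fin (2 * r + 1)) = true ∧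
       v ((2 * r : ℕ) : Fin (2 * r + 1)) = true ∧
       v ((r : ℕ) : Fin (2 * r + 1)) = false ∧
       (∀ j ∈ Finset.Icc 1 (r - 1),
         0 ≤ ∑ i ∈ Finset.Icc 1 j,
           dyckWt (v ((i : ℕ) : Fin (2 * r + 1))) (v ((i + r : ℕ) : Fin (2 * r + 1)))) ∧
       ∑ i ∈ Finset.Icc 1 (r - 1),
           dyckWt (v ((i : ℕ) : Fin (2 * r + 1))) (v ((i + r : ℕ) : Fin (2 * r + 1))) = 0}


/-! ### Auxiliary lemmas -/

section MonoAux

variable {n r : ℕ}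

/-- Pointwise order on configurations. -/
def BLe {n : ℕ} (σ τ : ZMod n → Bool) : Prop := ∀ i, σ i = true → τ i = true

lemma indLe {σ τ : ZMod n → Bool} (h : BLe σ τ) (x : ZMod n) :
    (if σ x then (1 : ℕ) else 0) ≤ (if τ x then 1 else 0) := by
  by_cases hx : σ x = true
  · simp [hx, h x hx]
  · simp only [Bool.not_eq_true] at hx
    simp [hx]

lemma activeNbrs_mono {σ τ : ZMod n → Bool} (h : BLe σ τ) (i : ZMod n) :
    activeNbrs n r σ i ≤ activeNbrs n r τ i :=
  Finset.sum_le_sum fun _ _ => add_le_add (indLe h _) (indLe h _)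

lemma le_ringStep (σ : ZMod n → Bool) : BLe σ (ringStep n r σ) := by
  intro i h; simp [ringStep, h]

lemma ringStep_mono {σ τ : ZMod n → Bool} (h : BLe σ τ) :
    BLe (ringStep n r σ) (ringStep n r τ) := by
  intro i hi
  simp only [ringStep, Bool.or_eq_true, decide_eq_true_eq] at hi ⊢
  rcases hi with h1 | h2
  · exact Or.inl (h i h1)
  · exact Or.inr (le_trans h2 (activeNbrs_mono h i))

lemma le_iterate (σ : ZMod n → Bool) (m : ℕ) : BLe σ ((ringStep n r)^[m] σ) := by
  induction m with
  | zero => intro i h; simpa using h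
  | succ m ih =>
    intro i h
    rw [Function.iterate_succ_apply']
    exact le_ringStep _ _ (ih i h)

lemma iterate_le_iterate (σ : ZMod n → Bool) {a b : ℕ} (hab : a ≤ b) :
    BLe ((ringStep n r)^[a] σ) ((ringStep n r)^[b] σ) := by
  intro i h
  have hb : (ringStep n r)^[b] σ = (ringStep n r)^[b - a] ((ringStep n r)^[a] σ) := by
    rw [← Function.iterate_add_apply]
    congr 1
    omega
  rw [hb]
  exact le_iterate _ _ i h

lemma ringStep_activate {σ : ZMod n → Bool} {i : ZMod n}
    (h : r + 1 ≤ activeNbrs n r σ i) : ringStep n r σ i = true := by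
  simp [ringStep, h]

end MonoAux

/-- Indicator/weight identity. -/
lemma dyck_bool_id : ∀ a b : Bool,
    ((if a then (1 : ℤ) else 0) + (if b then 1 else 0)) = 1 - dyckWt a b := by decide

/-- The key counting inequality for the rightward sweep, extracted in purely
arithmetic form:  `f` is the indicator of ones, `d` the Dyck weight sequence. -/
lemma key_ineq (r t : ℕ) (f : ℕ → ℕ) (d : ℕ → ℤ)
    (hfd : ∀ i, (f i : ℤ) + f (i + r) = 1 - d i)
    (hsum : ∑ p ∈ Finset.Ico 0 (2 * r + 1), f p = r + 1)
    (hf0 : f 0 = 1) (hfr : f r = 0) (hfrt : f (r + t) = 0)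
    (hD : ∀ j ∈ Finset.Icc 1 (r - 1), 0 ≤ ∑ i ∈ Finset.Icc 1 j, d i)
    (ht : t < r) :
    r + 1 ≤ ∑ k ∈ Finset.Icc 1 r,
      ((if k ≤ r - t then f (r + t + k) else 0) + (if k ≤ t then 1 else f (r + t - k))) := by
  -- interval sums decomposition
  have hEA : ∑ k ∈ Finset.Icc 1 r, (if k ≤ r - t then f (r + t + k) else 0)
      = ∑ p ∈ Finset.Ico (r + t + 1) (2 * r + 1), f p := by
    have h1 : ∑ k ∈ Finset.Icc 1 r, (if k ≤ r - t then f (r + t + k) else 0)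
        = ∑ k ∈ Finset.Icc 1 (r - t), (if k ≤ r - t then f (r + t + k) else 0) := by
      refine (Finset.sum_subset (Finset.Icc_subset_Icc_right (by omega)) ?_).symm
      intro x hx hnx
      rw [Finset.mem_Icc] at hx
      rw [Finset.mem_Icc] at hnx
      have : ¬ x ≤ r - t := by omega
      simp [this]
    rw [h1]
    have h2 : ∑ k ∈ Finset.Icc 1 (r - t), (if k ≤ r - t then f (r + t + k) else 0)
        = ∑ k ∈ Finset.Icc 1 (r - t), f (r + t + k) := by
      refine Finset.sum_congr rfl fun k hk => ?_
      rw [Finset.mem_Icc] at hk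
      simp [hk.2]
    rw [h2, ← Finset.Ico_add_one_right_eq_Icc, Finset.sum_Ico_eq_sum_range,
      Finset.sum_Ico_eq_sum_range]
    have h3 : r - t + 1 - 1 = r - t := by omega
    have h4 : 2 * r + 1 - (r + t + 1) = r - t := by omega
    rw [h3, h4]
    refine Finset.sum_congr rfl fun i hi => ?_
    rw [Finset.mem_range] at hi
    congr 1
    omega
  have hEB : ∑ k ∈ Finset.Icc 1 r, (if k ≤ t then 1 else f (r + t - k))
      = t + ∑ p ∈ Finset.Ico t r, f p := by
    rw [← Finset.Ico_add_one_right_eq_Icc]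
    have hsplit : ∑ k ∈ Finset.Ico 1 (t + 1), (if k ≤ t then 1 else f (r + t - k))
        + ∑ k ∈ Finset.Ico (t + 1) (r + 1), (if k ≤ t then 1 else f (r + t - k))
        = ∑ k ∈ Finset.Ico 1 (Nat.succ r), (if k ≤ t then 1 else f (r + t - k)) :=
      Finset.sum_Ico_consecutive _ (by omega) (by omega)
    rw [← Nat.succ_eq_add_one, ← hsplit]
    have hB1 : ∑ k ∈ Finset.Ico 1 (t + 1), (if k ≤ t then 1 else f (r + t - k)) = t := by
      have : ∀ k ∈ Finset.Ico 1 (t + 1), (if k ≤ t then 1 else f (r + t - k)) = 1 := by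
        intro k hk
        rw [Finset.mem_Ico] at hk
        have : k ≤ t := by omega
        simp [this]
      rw [Finset.sum_congr rfl this, Finset.sum_const, Nat.card_Ico]
      simp
    have hB2 : ∑ k ∈ Finset.Ico (t + 1) (r + 1), (if k ≤ t then 1 else f (r + t - k))
        = ∑ p ∈ Finset.Ico t r, f p := by
      have e1 : ∑ k ∈ Finset.Ico (t + 1) (r + 1), (if k ≤ t then 1 else f (r + t - k))
          = ∑ k ∈ Finset.Ico (t + 1) (r + 1), f (r + t - k) := by
        refine Finset.sum_congr rfl fun k hk => ?_
        rw [Finset.mem_Ico] at hk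
        have : ¬ k ≤ t := by omega
        simp [this]
      rw [e1, Finset.sum_Ico_eq_sum_range]
      have h4 : r + 1 - (t + 1) = r - t := by omega
      rw [h4]
      have hrefl := Finset.sum_range_reflect (fun j => f (t + j)) (r - t)
      have e2 : ∑ i ∈ Finset.range (r - t), f (r + t - (t + 1 + i))
          = ∑ i ∈ Finset.range (r - t), f (t + (r - t - 1 - i)) := by
        refine Finset.sum_congr rfl fun i hi => ?_
        rw [Finset.mem_range] at hi
        congr 1
        omega
      rw [e2, hrefl, Finset.sum_Ico_eq_sum_range]
    rw [hB1, hB2]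
  rw [Finset.sum_add_distrib, hEA, hEB]
  -- interval chain
  have hchain : ∑ p ∈ Finset.Ico 0 t, f p + ∑ p ∈ Finset.Ico t r, f p
      + ∑ p ∈ Finset.Ico r (r + t), f p + f (r + t)
      + ∑ p ∈ Finset.Ico (r + t + 1) (2 * r + 1), f p = r + 1 := by
    have c1 : ∑ p ∈ Finset.Ico 0 t, f p + ∑ p ∈ Finset.Ico t r, f p
        = ∑ p ∈ Finset.Ico 0 r, f p := Finset.sum_Ico_consecutive _ (by omega) (by omega)
    have c2 : ∑ p ∈ Finset.Ico r (r + t), f p + ∑ p ∈ Finset.Ico (r + t) (2 * r + 1), f p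
        = ∑ p ∈ Finset.Ico r (2 * r + 1), f p :=
      Finset.sum_Ico_consecutive _ (by omega) (by omega)
    have c3 : ∑ p ∈ Finset.Ico 0 r, f p + ∑ p ∈ Finset.Ico r (2 * r + 1), f p
        = ∑ p ∈ Finset.Ico 0 (2 * r + 1), f p :=
      Finset.sum_Ico_consecutive _ (by omega) (by omega)
    have c4 : ∑ p ∈ Finset.Ico (r + t) (2 * r + 1), f p
        = f (r + t) + ∑ p ∈ Finset.Ico (r + t + 1) (2 * r + 1), f p :=
      Finset.sum_eq_sum_Ico_succ_bot (by omega) f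
    omega
  -- the Dyck bound
  have hclaim : ∑ p ∈ Finset.Ico 0 t, f p + ∑ p ∈ Finset.Ico r (r + t), f p ≤ t := by
    rcases Nat.eq_zero_or_pos t with h0 | hpos
    · subst h0
      simp
    · have e06 : ∑ p ∈ Finset.Ico 0 t, f p = f 0 + ∑ p ∈ Finset.Ico 1 t, f p :=
        Finset.sum_eq_sum_Ico_succ_bot (by omega) f
      have e04 : ∑ p ∈ Finset.Ico r (r + t), f p
          = f r + ∑ p ∈ Finset.Ico (r + 1) (r + t), f p :=
        Finset.sum_eq_sum_Ico_succ_bot (by omega) f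
      have er1 : ∑ p ∈ Finset.Ico 1 t, f p = ∑ i ∈ Finset.range (t - 1), f (1 + i) := by
        rw [Finset.sum_Ico_eq_sum_range]
      have er2 : ∑ p ∈ Finset.Ico (r + 1) (r + t), f p
          = ∑ i ∈ Finset.range (t - 1), f (r + 1 + i) := by
        rw [Finset.sum_Ico_eq_sum_range]
        have : r + t - (r + 1) = t - 1 := by omega
        rw [this]
      have hdnn : 0 ≤ ∑ i ∈ Finset.range (t - 1), d (1 + i) := by
        rcases Nat.lt_or_ge t 2 with h2 | h2
        · have : t - 1 = 0 := by omega
          simp [this]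
        · have hIcc : ∑ i ∈ Finset.range (t - 1), d (1 + i)
              = ∑ i ∈ Finset.Icc 1 (t - 1), d i := by
            rw [← Finset.Ico_add_one_right_eq_Icc, Finset.sum_Ico_eq_sum_range]
            have : t - 1 + 1 - 1 = t - 1 := by omega
            rw [this]
          rw [hIcc]
          exact hD (t - 1) (Finset.mem_Icc.mpr ⟨by omega, by omega⟩)
      have hb : (((∑ i ∈ Finset.range (t - 1), f (1 + i) : ℕ)) : ℤ)
          + (((∑ i ∈ Finset.range (t - 1), f (r + 1 + i) : ℕ)) : ℤ) ≤ (t : ℤ) - 1 := by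
        push_cast
        rw [← Finset.sum_add_distrib]
        have hsum3 : ∑ i ∈ Finset.range (t - 1), (((f (1 + i) : ℤ)) + (f (r + 1 + i) : ℤ))
            = ∑ i ∈ Finset.range (t - 1), (1 - d (1 + i)) := by
          refine Finset.sum_congr rfl fun i _ => ?_
          have := hfd (1 + i)
          have hidx : 1 + i + r = r + 1 + i := by omega
          rw [hidx] at this
          exact this
        rw [hsum3, Finset.sum_sub_distrib, Finset.sum_const, Finset.card_range,
          nsmul_eq_mul, mul_one]
        have hc : ((t - 1 : ℕ) : ℤ) = (t : ℤ) - 1 := by omega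
        rw [hc]
        linarith [hdnn]
      omega
  omega
lemma mem_Sspread_of_mem_Tset {r : ℕ} (hr : 0 < r) {v : Fin (2 * r + 1) → Bool}
    (hv : v ∈ Tset r) : v ∈ Sspread (2 * r + 1) r := by
  obtain ⟨hones, hzeros, h0, h2r, hrr, hDyck, -⟩ := hv
  -- `vb p` : value of the word at position `p : ℕ`
  set vb : ℕ → Bool := fun p => if h : p < 2 * r + 1 then v ⟨p, h⟩ else false with hvb
  have hvbv : ∀ (p : ℕ) (h : p < 2 * r + 1), vb p = v ⟨p, h⟩ := by
    intro p h; simp only [hvb, dif_pos h]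
  have hvcast : ∀ (p : ℕ), p < 2 * r + 1 → v ((p : ℕ) : Fin (2 * r + 1)) = vb p := by
    intro p h
    rw [hvbv p h]
    congr 1
    exact Fin.ext (Fin.val_cast_of_lt h)
  set f : ℕ → ℕ := fun p => if vb p then 1 else 0 with hf
  set d : ℕ → ℤ := fun i => dyckWt (vb i) (vb (i + r)) with hd
  have hvb0 : vb 0 = true := by rw [← hvcast 0 (by omega)]; exact_mod_cast h0
  have hvb2r : vb (2 * r) = true := by rw [← hvcast (2 * r) (by omega)]; exact h2r
  have hvbr : vb r = false := by rw [← hvcast r (by omega)]; exact hrr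
  have hf0 : f 0 = 1 := by simp [hf, hvb0]
  have hfr : f r = 0 := by simp [hf, hvbr]
  have hfd : ∀ i, (f i : ℤ) + f (i + r) = 1 - d i := by
    intro i
    simp only [hf, hd]
    cases h1 : vb i <;> cases h2 : vb (i + r) <;> simp [dyckWt]
  have hsum : ∑ p ∈ Finset.Ico 0 (2 * r + 1), f p = r + 1 := by
    rw [← Finset.range_eq_Ico, ← Fin.sum_univ_eq_sum_range (fun p => f p) (2 * r + 1)]
    rw [Finset.card_filter] at hones
    rw [← hones]
    refine Finset.sum_congr rfl fun i _ => ?_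
    have : vb i.val = v i := by rw [hvbv i.val i.isLt]
    simp [hf, this]
  have hD : ∀ j ∈ Finset.Icc 1 (r - 1), 0 ≤ ∑ i ∈ Finset.Icc 1 j, d i := by
    intro j hj
    rw [Finset.mem_Icc] at hj
    have h := hDyck j (Finset.mem_Icc.mpr hj)
    have he : ∑ i ∈ Finset.Icc 1 j, d i
        = ∑ i ∈ Finset.Icc 1 j, dyckWt (v ((i : ℕ) : Fin (2 * r + 1)))
            (v ((i + r : ℕ) : Fin (2 * r + 1))) := by
      refine Finset.sum_congr rfl fun i hi => ?_
      rw [Finset.mem_Icc] at hi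
      simp only [hd]
      rw [hvcast i (by omega), hvcast (i + r) (by omega)]
    rw [he]
    exact h
  constructor
  · -- no r+1 consecutive zeros (there are only r zeros in total)
    rintro ⟨i, hil, hz⟩
    have hmem : ∀ a ∈ Finset.range (r + 1),
        ((i + a : ℕ) : Fin (2 * r + 1)) ∈
          Finset.univ.filter (fun j => v j = false) := by
      intro a ha
      rw [Finset.mem_range] at ha
      simp only [Finset.mem_filter, Finset.mem_univ, true_and]
      rw [hvcast (i + a) (by omega), hvbv (i + a) (by omega)]
      exact hz a ha
    have hinj : Set.InjOn (fun a : ℕ => ((i + a : ℕ) : Fin (2 * r + 1)))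
        (Finset.range (r + 1)) := by
      intro a ha b hb hab
      simp only [Finset.coe_range, Set.mem_Iio] at ha hb
      have := congrArg Fin.val hab
      rw [Fin.val_cast_of_lt (by omega), Fin.val_cast_of_lt (by omega)] at this
      omega
    have hcard := Finset.card_le_card_of_injOn _ hmem hinj
    rw [Finset.card_range, hzeros] at hcard
    omega
  · -- spreading
    intro n hn _hl c σ hσ
    have hσ' : ∀ p : ℕ, p ≤ 2 * r → σ (c + (p : ZMod n)) = vb p := by
      intro p hp
      rw [hvbv p (by omega)]
      exact hσ ⟨p, by omega⟩
    -- once active, always active; block ones stay active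
    have hbase : ∀ (m p : ℕ), p ≤ 2 * r → vb p = true →
        (ringStep n r)^[m] σ (c + (p : ZMod n)) = true := by
      intro m p hp hvp
      exact le_iterate σ m _ (by rw [hσ' p hp]; exact hvp)
    -- rightward sweep: after t steps, positions r, …, r+t-1 are active
    have right : ∀ t : ℕ, t ≤ r → ∀ m : ℕ, r ≤ m → m < r + t →
        (ringStep n r)^[t] σ (c + (m : ZMod n)) = true := by
      intro t
      induction t with
      | zero => intro _ m _ hm; omega
      | succ t ih =>
        intro ht m hm hmt
        rw [Function.iterate_succ_apply']
        rcases Nat.lt_or_ge m (r + t) with hlt | hge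
        · exact le_ringStep _ _ (ih (by omega) m hm hlt)
        · have hmeq : m = r + t := by omega
          subst hmeq
          rcases Bool.eq_false_or_eq_true (vb (r + t)) with htrue | hfalse
          · exact le_ringStep _ _ (hbase t (r + t) (by omega) htrue)
          · apply ringStep_activate
            have hfrt : f (r + t) = 0 := by simp [hf, hfalse]
            have key := key_ineq r t f d hfd hsum hf0 hfr hfrt hD (by omega)
            have hg : ∀ k ∈ Finset.Icc 1 r,
                ((if k ≤ r - t then f (r + t + k) else 0)
                  + (if k ≤ t then 1 else f (r + t - k)))
                ≤ ((if (ringStep n r)^[t] σ ((c + ((r + t : ℕ) : ZMod n)) + (k : ZMod n))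
                      then 1 else 0)
                  + (if (ringStep n r)^[t] σ ((c + ((r + t : ℕ) : ZMod n)) - (k : ZMod n))
                      then 1 else 0)) := by
              intro k hk
              rw [Finset.mem_Icc] at hk
              apply add_le_add
              · by_cases hkr : k ≤ r - t
                · have hcast1 : (c + ((r + t : ℕ) : ZMod n)) + (k : ZMod n)
                      = c + ((r + t + k : ℕ) : ZMod n) := by push_cast; ring
                  rw [hcast1]
                  simp only [if_pos hkr]
                  rcases Bool.eq_false_or_eq_true (vb (r + t + k)) with hvp | hvp
                  · rw [hbase t (r + t + k) (by omega) hvp]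
                    simp [hf, hvp]
                  · simp [hf, hvp]
                · simp [hkr]
              · by_cases hkt : k ≤ t
                · have hcast2 : (c + ((r + t : ℕ) : ZMod n)) - (k : ZMod n)
                      = c + ((r + t - k : ℕ) : ZMod n) := by
                    rw [Nat.cast_sub (by omega : k ≤ r + t)]
                    ring
                  rw [hcast2, ih (by omega) (r + t - k) (by omega) (by omega)]
                  simp [hkt]
                · have hcast2 : (c + ((r + t : ℕ) : ZMod n)) - (k : ZMod n)
                      = c + ((r + t - k : ℕ) : ZMod n) := by
                    rw [Nat.cast_sub (by omega : k ≤ r + t)]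
                    ring
                  rw [hcast2]
                  simp only [if_neg hkt]
                  rcases Bool.eq_false_or_eq_true (vb (r + t - k)) with hvp | hvp
                  · rw [hbase t (r + t - k) (by omega) hvp]
                    simp [hf, hvp]
                  · simp [hf, hvp]
            calc r + 1 ≤ _ := key
              _ ≤ activeNbrs n r ((ringStep n r)^[t] σ) (c + ((r + t : ℕ) : ZMod n)) := by
                  simp only [activeNbrs]
                  exact Finset.sum_le_sum hg
    -- leftward sweep: after r + s steps, positions ≥ r - s are active
    have left : ∀ s : ℕ, s ≤ r → ∀ m : ℕ, m ≤ 2 * r → r - s ≤ m →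
        (ringStep n r)^[r + s] σ (c + (m : ZMod n)) = true := by
      intro s
      induction s with
      | zero =>
        intro _ m hm2 hm1
        rcases Nat.lt_or_ge m (2 * r) with h | h
        · exact right r le_rfl m (by omega) (by omega)
        · have : m = 2 * r := by omega
          subst this
          exact hbase r (2 * r) le_rfl hvb2r
      | succ s ih =>
        intro hs m hm2 hm1
        have hstep : r + (s + 1) = (r + s) + 1 := rfl
        rw [hstep, Function.iterate_succ_apply']
        rcases le_or_gt (r - s) m with hge | hlt
        · exact le_ringStep _ _ (ih (by omega) m hm2 hge)
        · have hmeq : m = r - s - 1 := by omega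
          rcases Bool.eq_false_or_eq_true (vb m) with htrue | hfalse
          · exact le_ringStep _ _ (hbase (r + s) m hm2 htrue)
          · have hm0 : 1 ≤ m := by
              rcases Nat.eq_zero_or_pos m with h | h
              · rw [h] at hfalse
                rw [hvb0] at hfalse
                exact absurd hfalse (by simp)
              · exact h
            apply ringStep_activate
            have hg : ∀ k ∈ Finset.Icc 1 r,
                ((1 : ℕ) + (if k = m then 1 else 0))
                ≤ ((if (ringStep n r)^[r + s] σ ((c + ((m : ℕ) : ZMod n)) + (k : ZMod n))
                      then 1 else 0)
                  + (if (ringStep n r)^[r + s] σ ((c + ((m : ℕ) : ZMod n)) - (k : ZMod n))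
                      then 1 else 0)) := by
              intro k hk
              rw [Finset.mem_Icc] at hk
              apply add_le_add
              · have hcast1 : (c + ((m : ℕ) : ZMod n)) + (k : ZMod n)
                    = c + ((m + k : ℕ) : ZMod n) := by push_cast; ring
                rw [hcast1, ih (by omega) (m + k) (by omega) (by omega)]
                simp
              · by_cases hkm : k = m
                · subst hkm
                  have hcast2 : (c + ((k : ℕ) : ZMod n)) - (k : ZMod n)
                      = c + ((0 : ℕ) : ZMod n) := by push_cast; ring
                  rw [hcast2, hbase (r + s) 0 (by omega) hvb0]
                  simp
                · simp [hkm]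
            have hsum1 : ∑ k ∈ Finset.Icc 1 r, ((1 : ℕ) + (if k = m then 1 else 0))
                = r + 1 := by
              rw [Finset.sum_add_distrib, Finset.sum_const, Nat.card_Icc,
                Finset.sum_ite_eq' (Finset.Icc 1 r) m (fun _ => 1)]
              rw [if_pos (Finset.mem_Icc.mpr ⟨by omega, by omega⟩)]
              simp
            calc r + 1 = _ := hsum1.symm
              _ ≤ activeNbrs n r ((ringStep n r)^[r + s] σ) (c + ((m : ℕ) : ZMod n)) := by
                  simp only [activeNbrs]
                  exact Finset.sum_le_sum hg
    intro i
    have hlast := left r le_rfl i.val (by omega) (by omega)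
    have hfin : ringFix n r σ = (ringStep n r)^[n] σ := rfl
    rw [hfin]
    exact iterate_le_iterate σ (by omega : r + r ≤ n) _ hlast

/-- `|T_r| ≤ |S_{2r+1,r}|`. -/
theorem T_card_le_S_card (r : ℕ) (hr : 0 < r) :
    (Tset r).ncard ≤ (Sspread (2 * r + 1) r).ncard := by
  apply Set.ncard_le_ncard
  · intro v hv
    exact mem_Sspread_of_mem_Tset hr hv
  · exact Set.toFinite _
end

section
/- There exist a constant c > 0 and a nonnegative integer d such that for all positive integers r, |T_r| ≥ c·4^r / r^d. -/
open Finset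
open Fin.NatCast


namespace TProof

open DyckStep List

/-- `U ↦ false`, `D ↦ true`. -/
def stepB : DyckStep → Bool
  | U => false
  | D => true

lemma stepB_inj : Function.Injective stepB := by
  intro a b h; cases a <;> cases b <;> simp [stepB] at h ⊢

/-- indicator of `D`. -/
def dInd : DyckStep → ℕ
  | U => 0
  | D => 1

lemma count_U_add_count_D (l : List DyckStep) : l.count U + l.count D = l.length := by
  induction l with
  | nil => simp
  | cons a t ih =>
    cases a <;> simp [List.count_cons, List.length_cons] <;> omega

lemma sum_dInd (l : List DyckStep) : ∀ m : ℕ,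
    ∑ k ∈ Finset.range m, dInd (l.getD k U) = (l.take m).count D := by
  induction l with
  | nil =>
    intro m
    simp [dInd]
  | cons a t ih =>
    intro m
    cases m with
    | zero => simp
    | succ m =>
      rw [Finset.sum_range_succ']
      simp only [List.getD_cons_succ, List.getD_cons_zero, List.take_succ_cons,
        List.count_cons, ih m]
      cases a <;> simp [dInd]

lemma sum_range_double (f : ℕ → ℕ) (m : ℕ) :
    ∑ j ∈ Finset.range m, (f (2 * j) + f (2 * j + 1)) = ∑ k ∈ Finset.range (2 * m), f k := by
  induction m with
  | zero => simp
  | succ m ih =>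
    rw [Finset.sum_range_succ, ih, show 2 * (m + 1) = 2 * m + 1 + 1 by ring,
      Finset.sum_range_succ, Finset.sum_range_succ]
    omega

/-- The word `v` built from a Dyck word (list) `l` of length `2(r-1)`. -/
def toWord (r : ℕ) (l : List DyckStep) : Fin (2 * r + 1) → Bool := fun i =>
  if (i : ℕ) = 0 then true
  else if (i : ℕ) = 2 * r then true
  else if (i : ℕ) = r then false
  else if (i : ℕ) < r then stepB (l.getD (2 * (i : ℕ) - 2) U)
  else stepB (l.getD (2 * ((i : ℕ) - r) - 1) U)

lemma val_cast (r n : ℕ) (hn : n < 2 * r + 1) : ((n : Fin (2 * r + 1)) : ℕ) = n :=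
  Fin.val_cast_of_lt hn

lemma toWord_cast (r n : ℕ) (hn : n < 2 * r + 1) (l : List DyckStep) :
    toWord r l ((n : ℕ) : Fin (2 * r + 1)) =
      (if n = 0 then true
       else if n = 2 * r then true
       else if n = r then false
       else if n < r then stepB (l.getD (2 * n - 2) U)
       else stepB (l.getD (2 * (n - r) - 1) U)) := by
  simp only [toWord, val_cast r n hn]

lemma toWord_mid (r n : ℕ) (hr : 0 < r) (h1 : 1 ≤ n) (h2 : n < r) (l : List DyckStep) :
    toWord r l ((n : ℕ) : Fin (2 * r + 1)) = stepB (l.getD (2 * n - 2) U) := by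
  rw [toWord_cast r n (by omega) l, if_neg (by omega), if_neg (by omega),
    if_neg (by omega), if_pos h2]

lemma toWord_mid2 (r n : ℕ) (hr : 0 < r) (h1 : 1 ≤ n) (h2 : n < r) (l : List DyckStep) :
    toWord r l ((n + r : ℕ) : Fin (2 * r + 1)) = stepB (l.getD (2 * n - 1) U) := by
  rw [toWord_cast r (n + r) (by omega) l, if_neg (by omega), if_neg (by omega),
    if_neg (by omega), if_neg (by omega)]
  congr 2
  omega

lemma dyckWt_stepB (a b : DyckStep) :
    dyckWt (stepB a) (stepB b) = 1 - ((dInd a : ℤ) + (dInd b : ℤ)) := by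
  cases a <;> cases b <;> simp [dyckWt, stepB, dInd]

section Main

variable {r : ℕ} (hr : 0 < r) (l : List DyckStep)
  (hlen : l.length = 2 * (r - 1))
  (hU : l.count U = r - 1) (hD : l.count D = r - 1)
  (hpre : ∀ i, (l.take i).count D ≤ (l.take i).count U)

include hr hlen hD in
lemma prefix_sum_eval (j : ℕ) (hj : j ≤ r - 1) :
    ∑ i ∈ Finset.Icc 1 j,
        dyckWt (toWord r l ((i : ℕ) : Fin (2 * r + 1)))
          (toWord r l ((i + r : ℕ) : Fin (2 * r + 1)))
      = (j : ℤ) - ((l.take (2 * j)).count D : ℤ) := by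
  rw [← Finset.Ico_add_one_right_eq_Icc, Finset.sum_Ico_eq_sum_range]
  have heval : ∀ t ∈ Finset.range (j + 1 - 1),
      dyckWt (toWord r l (((1 + t : ℕ)) : Fin (2 * r + 1)))
          (toWord r l (((1 + t + r : ℕ)) : Fin (2 * r + 1)))
        = 1 - ((dInd (l.getD (2 * t) U) : ℤ) + (dInd (l.getD (2 * t + 1) U) : ℤ)) := by
    intro t ht
    simp only [Finset.mem_range] at ht
    rw [toWord_mid r (1 + t) hr (by omega) (by omega) l,
      toWord_mid2 r (1 + t) hr (by omega) (by omega) l,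
      show 2 * (1 + t) - 2 = 2 * t by omega, show 2 * (1 + t) - 1 = 2 * t + 1 by omega,
      dyckWt_stepB]
  rw [Finset.sum_congr rfl heval, Finset.sum_sub_distrib, Finset.sum_const]
  simp only [Finset.card_range, show j + 1 - 1 = j by omega, nsmul_eq_mul, mul_one]
  have hnat : ∑ t ∈ Finset.range j,
      (dInd (l.getD (2 * t) U) + dInd (l.getD (2 * t + 1) U)) = (l.take (2 * j)).count D := by
    rw [sum_range_double (fun k => dInd (l.getD k U)) j, sum_dInd]
  congr 1
  exact_mod_cast hnat

include hlen hpre in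
lemma countD_take_le (j : ℕ) (hj : j ≤ r - 1) : (l.take (2 * j)).count D ≤ j := by
  have h1 := hpre (2 * j)
  have h2 := count_U_add_count_D (l.take (2 * j))
  rw [List.length_take] at h2
  omega

include hr hlen hU hD hpre in
lemma toWord_mem : toWord r l ∈ Tset r := by
  have hvr : toWord r l ((r : ℕ) : Fin (2 * r + 1)) = false := by
    rw [toWord_cast r r (by omega) l, if_neg (by omega), if_neg (by omega), if_pos rfl]
  have hv0 : toWord r l ((0 : ℕ) : Fin (2 * r + 1)) = true := by
    rw [toWord_cast r 0 (by omega) l, if_pos rfl]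
  have hv2r : toWord r l ((2 * r : ℕ) : Fin (2 * r + 1)) = true := by
    rw [toWord_cast r (2 * r) (by omega) l, if_neg (by omega), if_pos rfl]
  -- count of trues
  have htrue : (Finset.univ.filter (fun i => toWord r l i = true)).card = r + 1 := by
    rw [Finset.card_filter]
    have hfun : ∀ i : Fin (2 * r + 1),
        (if toWord r l i = true then 1 else 0) =
          (fun n : ℕ => if toWord r l ((n : ℕ) : Fin (2 * r + 1)) = true then 1 else 0) (i : ℕ) := by
      intro i
      simp only
      rw [Fin.cast_val_eq_self i]
    rw [Finset.sum_congr rfl (fun i _ => hfun i),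
      Fin.sum_univ_eq_sum_range (fun n : ℕ =>
        if toWord r l ((n : ℕ) : Fin (2 * r + 1)) = true then 1 else 0) (2 * r + 1)]
    set g : ℕ → ℕ := fun n => if toWord r l ((n : ℕ) : Fin (2 * r + 1)) = true then 1 else 0
      with hg
    have h2r : g (2 * r) = 1 := by simp only [hg]; rw [hv2r]; rfl
    have h0 : g 0 = 1 := by simp only [hg]; rw [hv0]; rfl
    have hrr : g r = 0 := by simp only [hg]; rw [hvr]; rfl
    have e1 : ∑ n ∈ Finset.range (2 * r + 1), g n
        = ∑ n ∈ Finset.range (2 * r), g n + g (2 * r) := Finset.sum_range_succ g (2 * r)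
    have e2 : ∑ n ∈ Finset.range (2 * r), g n
        = ∑ n ∈ Finset.Ico 0 (r + 1), g n + ∑ n ∈ Finset.Ico (r + 1) (2 * r), g n := by
      rw [Finset.range_eq_Ico]
      exact (Finset.sum_Ico_consecutive _ (by omega) (by omega)).symm
    have e3 : ∑ n ∈ Finset.Ico 0 (r + 1), g n = ∑ n ∈ Finset.Ico 0 r, g n + g r :=
      Finset.sum_Ico_succ_top (by omega) g
    have e4 : ∑ n ∈ Finset.Ico 0 r, g n = g 0 + ∑ n ∈ Finset.Ico 1 r, g n :=
      Finset.sum_eq_sum_Ico_succ_bot (by omega) g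
    have hmidsum : ∑ n ∈ Finset.Ico 1 r, g n
        = ∑ t ∈ Finset.range (r - 1), dInd (l.getD (2 * t) U) := by
      rw [Finset.sum_Ico_eq_sum_range]
      apply Finset.sum_congr rfl
      intro t ht
      simp only [Finset.mem_range] at ht
      simp only [hg]
      rw [toWord_mid r (1 + t) hr (by omega) (by omega) l,
        show 2 * (1 + t) - 2 = 2 * t by omega]
      cases hc : l.getD (2 * t) U <;> simp [stepB, dInd]
    have hmidsum2 : ∑ n ∈ Finset.Ico (r + 1) (2 * r), g n
        = ∑ t ∈ Finset.range (r - 1), dInd (l.getD (2 * t + 1) U) := by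
      rw [Finset.sum_Ico_eq_sum_range]
      rw [show 2 * r - (r + 1) = r - 1 by omega]
      apply Finset.sum_congr rfl
      intro t ht
      simp only [Finset.mem_range] at ht
      simp only [hg]
      rw [show r + 1 + t = (1 + t) + r by omega,
        toWord_mid2 r (1 + t) hr (by omega) (by omega) l,
        show 2 * (1 + t) - 1 = 2 * t + 1 by omega]
      cases hc : l.getD (2 * t + 1) U <;> simp [stepB, dInd]
    have hDsum : ∑ t ∈ Finset.range (r - 1), dInd (l.getD (2 * t) U)
        + ∑ t ∈ Finset.range (r - 1), dInd (l.getD (2 * t + 1) U) = r - 1 := by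
      rw [← Finset.sum_add_distrib, sum_range_double (fun k => dInd (l.getD k U)) (r - 1),
        sum_dInd, ← hlen, List.take_length, hD]
    rw [e1, e2, e3, e4, h0, hrr, h2r, hmidsum, hmidsum2]
    omega
  have hfalse : (Finset.univ.filter (fun i => toWord r l i = false)).card = r := by
    have := Finset.card_filter_add_card_filter_not
      (s := (Finset.univ : Finset (Fin (2 * r + 1))))
      (p := fun i => toWord r l i = true)
    have hcompl : (Finset.univ.filter (fun i => ¬ toWord r l i = true)).card
        = (Finset.univ.filter (fun i => toWord r l i = false)).card := by
      congr 1
      apply Finset.filter_congr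
      intro i _
      simp [Bool.not_eq_true]
    simp only [Finset.card_univ, Fintype.card_fin] at this
    omega
  refine ⟨htrue, hfalse, hv0, hv2r, hvr, ?_, ?_⟩
  · intro j hj
    simp only [Finset.mem_Icc] at hj
    rw [prefix_sum_eval hr l hlen hD j hj.2]
    have := countD_take_le l hlen hpre j hj.2
    omega
  · rw [prefix_sum_eval hr l hlen hD (r - 1) le_rfl, ← hlen, List.take_length, hD]
    omega

end Main

lemma toWord_inj {r : ℕ} (hr : 0 < r) {l l' : List DyckStep}
    (hlen : l.length = 2 * (r - 1)) (hlen' : l'.length = 2 * (r - 1))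
    (h : toWord r l = toWord r l') : l = l' := by
  apply List.ext_getElem (by omega)
  intro k hk hk'
  have hgd : l.getD k U = l'.getD k U := by
    rcases Nat.even_or_odd k with ⟨t, ht⟩ | ⟨t, ht⟩
    · -- k = 2t, use index 1 + t
      have h1 : 1 ≤ 1 + t := by omega
      have h2 : 1 + t < r := by omega
      have := congrFun h (((1 + t : ℕ)) : Fin (2 * r + 1))
      rw [toWord_mid r (1 + t) hr h1 h2 l, toWord_mid r (1 + t) hr h1 h2 l'] at this
      have hidx : 2 * (1 + t) - 2 = k := by omega
      rw [hidx] at this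
      exact stepB_inj this
    · have h1 : 1 ≤ 1 + t := by omega
      have h2 : 1 + t < r := by omega
      have := congrFun h (((1 + t + r : ℕ)) : Fin (2 * r + 1))
      rw [toWord_mid2 r (1 + t) hr h1 h2 l, toWord_mid2 r (1 + t) hr h1 h2 l'] at this
      have hidx : 2 * (1 + t) - 1 = k := by omega
      rw [hidx] at this
      exact stepB_inj this
  rwa [List.getD_eq_getElem l U hk, List.getD_eq_getElem l' U (by omega)] at hgd

lemma catalan_le_ncard {r : ℕ} (hr : 0 < r) : catalan (r - 1) ≤ (Tset r).ncard := by
  classical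
  set F : {p : DyckWord // p.semilength = r - 1} → (Fin (2 * r + 1) → Bool) :=
    fun p => toWord r p.1.toList with hF
  have hlenp : ∀ p : {p : DyckWord // p.semilength = r - 1},
      p.1.toList.length = 2 * (r - 1) := by
    intro p
    have := p.1.two_mul_semilength_eq_length
    rw [p.2] at this
    omega
  have hFinj : Function.Injective F := by
    intro p q hpq
    have := toWord_inj hr (hlenp p) (hlenp q) hpq
    exact Subtype.ext (DyckWord.ext this)
  have hrange : Set.range F ⊆ Tset r := by
    rintro _ ⟨p, rfl⟩
    apply toWord_mem hr p.1.toList (hlenp p)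
    · have := p.2
      simpa [DyckWord.semilength] using this
    · have := p.1.semilength_eq_count_D
      rw [p.2] at this
      omega
    · intro i
      exact p.1.count_D_le_count_U i
  have hcard : (Set.range F).ncard = catalan (r - 1) := by
    rw [← Nat.card_coe_set_eq, Nat.card_range_of_injective hFinj,
      Nat.card_eq_fintype_card, DyckWord.card_dyckWord_semilength_eq_catalan]
  calc catalan (r - 1) = (Set.range F).ncard := hcard.symm
    _ ≤ (Tset r).ncard := Set.ncard_le_ncard hrange (Set.toFinite _)

lemma nat_bound {r : ℕ} (hr : 0 < r) : 4 ^ r ≤ 4 * r ^ 3 * (Tset r).ncard := by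
  have h1 : 4 ^ (r - 1) ≤ (2 * (r - 1) + 1) * (2 * (r - 1)).choose (r - 1) :=
    Nat.four_pow_le_two_mul_add_one_mul_central_binom (r - 1)
  have h2 : (r - 1 + 1) * catalan (r - 1) = Nat.centralBinom (r - 1) :=
    succ_mul_catalan_eq_centralBinom (r - 1)
  have h3 : Nat.centralBinom (r - 1) = (2 * (r - 1)).choose (r - 1) := rfl
  have h4 : catalan (r - 1) ≤ (Tset r).ncard := catalan_le_ncard hr
  have h5 : 4 ^ r = 4 * 4 ^ (r - 1) := by
    rw [← pow_succ']
    congr 1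
    omega
  calc 4 ^ r = 4 * 4 ^ (r - 1) := h5
    _ ≤ 4 * ((2 * (r - 1) + 1) * ((r - 1 + 1) * catalan (r - 1))) := by
        rw [h2, h3]; exact Nat.mul_le_mul_left 4 h1
    _ ≤ 4 * (r ^ 3 * (Tset r).ncard) := by
        apply Nat.mul_le_mul_left 4
        calc (2 * (r - 1) + 1) * ((r - 1 + 1) * catalan (r - 1))
            ≤ (2 * (r - 1) + 1) * ((r - 1 + 1) * (Tset r).ncard) := by
              exact Nat.mul_le_mul_left _ (Nat.mul_le_mul_left _ h4)
          _ ≤ r ^ 3 * (Tset r).ncard := by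
              rw [← Nat.mul_assoc]
              apply Nat.mul_le_mul_right
              obtain ⟨m, rfl⟩ : ∃ m, r = m + 1 := ⟨r - 1, by omega⟩
              simp only [Nat.add_sub_cancel]
              calc (2 * m + 1) * (m + 1) ≤ (m + 1) ^ 2 * (m + 1) :=
                    Nat.mul_le_mul_right _ (by nlinarith)
                _ = (m + 1) ^ 3 := by ring
    _ = 4 * r ^ 3 * (Tset r).ncard := by ring

end TProof

/-- There are `c > 0` and `d ∈ ℕ` such that `|T_r| ≥ c·4^r/r^d` for all `r ≥ 1`. -/
theorem T_card_asymptotic :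
    ∃ c : ℝ, 0 < c ∧ ∃ d : ℕ, ∀ r : ℕ, 0 < r →
      c * 4 ^ r / (r : ℝ) ^ d ≤ ((Tset r).ncard : ℝ) := by
  refine ⟨1 / 4, by norm_num, 3, fun r hr => ?_⟩
  have key : (4 : ℝ) ^ r ≤ 4 * (r : ℝ) ^ 3 * ((Tset r).ncard : ℝ) := by
    exact_mod_cast TProof.nat_bound hr
  have hrpos : (0 : ℝ) < (r : ℝ) ^ 3 := by positivity
  rw [div_le_iff₀ hrpos]
  nlinarith [key]
end
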